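/- arXiv:1702.08076 — 6 statements merged into one kernel-verified Lean document; each statement's English description precedes it below -/
import Mathlib

section
/- Let A, G : E → E be maps such that Av ≥ 0 and Gv ≥ 0 for all 0 ≤ v ∈ E, ‖Av − Aw‖ ≤ κ‖v − w‖ for all nonnegative v, w ∈ E and some κ > 0, and for some κ₀ > 0, ‖Gv − Gw‖ ≤ e^{κ₀ r}‖v − w‖ for all v, w ∈ E_r^+ and all r > 0. Then for any T > 0, m > 0 and any 0 ≤ u₀ ∈ E there exists a unique nonnegative classical solution u ∈ C([0,T] → E) ∩ C¹((0,T] → E) of the equation ∂u/∂t(x,t) = (Au)(x,t) − m u(x,t) − u(x,t)(Gu)(x,t) with u(·,0) = u₀. -/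
open MeasureTheory Filter Topology
open scoped RealInnerProductSpace

noncomputable section

/-- Euclidean space `ℝ^d`. -/
abbrev EucSp (d : ℕ) := EuclideanSpace ℝ (Fin d)

/-- The Banach space `E = C_b(ℝ^d)` of bounded continuous functions with sup-norm. -/
abbrev BCF (d : ℕ) := BoundedContinuousFunction (EucSp d) ℝ

variable {d : ℕ}

/-- Convolution `(a ∗ v)(x) = ∫ a(x − y) v(y) dy`. -/
def convol (a v : EucSp d → ℝ) (x : EucSp d) : ℝ := ∫ y, a (x - y) * v y

/-- Membership in the tube `E_r^+ = {v ∈ E : 0 ≤ v ≤ r}`. -/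
def memTube (r : ℝ) (v : BCF d) : Prop := ∀ x, 0 ≤ v x ∧ v x ≤ r

/-- `u` is a classical solution of `∂ₜ u = κ a∗u − m u − u · Gu` on `[0, T]`:
`u ∈ C([0,T] → E) ∩ C¹((0,T] → E)` and the equation holds on `(0,T]`. -/
def IsSolOn (a : EucSp d → ℝ) (κ m : ℝ) (G : BCF d → BCF d) (T : ℝ)
    (u : ℝ → BCF d) : Prop :=
  ContinuousOn u (Set.Icc 0 T) ∧
    ∃ u' : ℝ → BCF d, ContinuousOn u' (Set.Ioc 0 T) ∧
      ∀ t ∈ Set.Ioc (0 : ℝ) T,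
        HasDerivWithinAt u (u' t) (Set.Ioc 0 T) t ∧
          ∀ x, u' t x = κ * convol a (⇑(u t)) x - m * u t x - u t x * G (u t) x

/-- `u` is a classical solution of `∂ₜ u = κ a∗u − m u − u · Gu` on `[0, ∞)`. -/
def IsSolGlobal (a : EucSp d → ℝ) (κ m : ℝ) (G : BCF d → BCF d)
    (u : ℝ → BCF d) : Prop :=
  ContinuousOn u (Set.Ici 0) ∧
    ∃ u' : ℝ → BCF d, ContinuousOn u' (Set.Ioi 0) ∧
      ∀ t ∈ Set.Ioi (0 : ℝ),
        HasDerivWithinAt u (u' t) (Set.Ioi 0) t ∧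
          ∀ x, u' t x = κ * convol a (⇑(u t)) x - m * u t x - u t x * G (u t) x

/-- `u` is a classical solution of the generalized equation
`∂ₜ u = Au − m u − u · Gu` on `[0, T]`. -/
def IsSolOnGen (A G : BCF d → BCF d) (m T : ℝ) (u : ℝ → BCF d) : Prop :=
  ContinuousOn u (Set.Icc 0 T) ∧
    ∃ u' : ℝ → BCF d, ContinuousOn u' (Set.Ioc 0 T) ∧
      ∀ t ∈ Set.Ioc (0 : ℝ) T,
        HasDerivWithinAt u (u' t) (Set.Ioc 0 T) t ∧
          ∀ x, u' t x = A (u t) x - m * u t x - u t x * G (u t) x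

/-- Membership in `Y_T = C([0,T] → E) ∩ C¹((0,T] → E)`, with derivative `u'`. -/
def MemY (T : ℝ) (u u' : ℝ → BCF d) : Prop :=
  ContinuousOn u (Set.Icc 0 T) ∧ ContinuousOn u' (Set.Ioc 0 T) ∧
    ∀ t ∈ Set.Ioc (0 : ℝ) T, HasDerivWithinAt u (u' t) (Set.Ioc 0 T) t

/-- The truncation `0 ∨ u ∧ r` of `u ∈ E`. -/
def truncate (u : BCF d) (r : ℝ) : BCF d :=
  BoundedContinuousFunction.ofNormedAddCommGroup
    (fun x => max 0 (min (u x) r))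
    (continuous_const.max (u.continuous.min continuous_const)) |r|
    (fun x => by
      rw [Real.norm_eq_abs, abs_of_nonneg (le_max_left 0 _)]
      exact max_le (abs_nonneg r) ((min_le_right _ _).trans (le_abs_self r)))

/-- The translation operator `(T_y v)(x) = v(x − y)` on `E`. -/
def translateBCF (v : BCF d) (y : EucSp d) : BCF d :=
  v.compContinuous ⟨fun x => x - y, by continuity⟩

/-- (A1): `m > 0` and `β := κ − m > 0`. -/
def assumA1 (κ m : ℝ) : Prop := 0 < m ∧ m < κ

/-- (A2): `0 = G0 ≤ Gv ≤ Gθ = β` for all `v ∈ E_θ^+`, with `θ > 0`. -/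
def assumA2 (G : BCF d → BCF d) (κ m θ : ℝ) : Prop :=
  0 < θ ∧ G 0 = 0 ∧ (∀ x, G (BoundedContinuousFunction.const (EucSp d) θ) x = κ - m) ∧
    ∀ v : BCF d, memTube θ v → ∀ x, 0 ≤ G v x ∧ G v x ≤ κ - m

/-- (A3): `G` is Lipschitz continuous on `E_θ^+`. -/
def assumA3 (G : BCF d → BCF d) (θ : ℝ) : Prop :=
  ∃ l > (0 : ℝ), ∀ v w : BCF d, memTube θ v → memTube θ w → ‖G v - G w‖ ≤ l * ‖v - w‖

/-- (A4): quasi-monotonicity of the right-hand side of the equation. -/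
def assumA4 (a : EucSp d → ℝ) (κ : ℝ) (G : BCF d → BCF d) (θ : ℝ) : Prop :=
  ∃ p ≥ (0 : ℝ), ∀ v w : BCF d, memTube θ v → memTube θ w → (∀ x, v x ≤ w x) →
    ∀ x, κ * convol a (⇑v) x - v x * G v x + p * v x ≤
      κ * convol a (⇑w) x - w x * G w x + p * w x

/-- (A5): the kernel `a` is non-degenerate at the origin. -/
def assumA5 (a : EucSp d → ℝ) : Prop :=
  ∃ ϱ > (0 : ℝ), ∀ᵐ (x : EucSp d) ∂volume, x ∈ Metric.ball (0 : EucSp d) ϱ → ϱ ≤ a x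

/-- (A6): `G` is continuous on `E_θ^+` for locally uniform convergence. -/
def assumA6 (G : BCF d → BCF d) (θ : ℝ) : Prop :=
  ∀ (vn : ℕ → BCF d) (v : BCF d), (∀ n, memTube θ (vn n)) → memTube θ v →
    TendstoLocallyUniformly (fun n => ⇑(vn n)) (⇑v) atTop →
    TendstoLocallyUniformly (fun n => ⇑(G (vn n))) (⇑(G v)) atTop

/-- (A7): `G` commutes with all translations. -/
def assumA7 (G : BCF d → BCF d) (θ : ℝ) : Prop :=
  ∀ v : BCF d, memTube θ v → ∀ y, G (translateBCF v y) = translateBCF (G v) y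

/-- (A8): `Gr < β` for all constant functions `r ∈ (0, θ)`. -/
def assumA8 (G : BCF d → BCF d) (κ m θ : ℝ) : Prop :=
  ∀ r : ℝ, 0 < r → r < θ →
    ∀ x, G (BoundedContinuousFunction.const (EucSp d) r) x < κ - m

/-- (A9): the kernel `a` has a finite first moment. -/
def assumA9 (a : EucSp d → ℝ) : Prop := Integrable (fun y => ‖y‖ * a y)

/-- (A10): there are `q ≥ 0`, `δ > 0` and a smooth bounded `0 ≤ b` with
`a − b ≥ δ 1_{B_δ(0)}` and `w · Gw ≤ κ b∗w + q w` on `E_θ^+`. -/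
def assumA10 (a : EucSp d → ℝ) (κ : ℝ) (G : BCF d → BCF d) (θ : ℝ) : Prop :=
  ∃ q ≥ (0 : ℝ), ∃ δ > (0 : ℝ), ∃ b : EucSp d → ℝ,
    (∀ x, 0 ≤ b x) ∧ (∀ n : ℕ, ContDiff ℝ n b) ∧ (∃ C, ∀ x, b x ≤ C) ∧
    (∀ x, (Metric.ball (0 : EucSp d) δ).indicator (fun _ => δ) x ≤ a x - b x) ∧
    ∀ w : BCF d, memTube θ w → ∀ x, w x * G w x ≤ κ * convol b (⇑w) x + q * w x

section AuxiliaryLemmas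
open Set
open scoped NNReal

variable {E' : Type*} [NormedAddCommGroup E'] [NormedSpace ℝ E'] [CompleteSpace E']

lemma hasDerivWithinAt_singleton' (f : ℝ → E') (D : E') (x : ℝ) :
    HasDerivWithinAt f D {x} x := by
  rw [hasDerivWithinAt_iff_hasFDerivWithinAt]
  simp only [HasFDerivWithinAt, nhdsWithin_singleton, hasFDerivAtFilter_iff_isLittleO,
    Filter.prod_pure_pure, Asymptotics.isLittleO_pure, sub_self, map_zero]

lemma exists_global_solution (F : E' → E') (L : ℝ≥0) (hF : LipschitzWith L F)
    (x₀ : E') (T : ℝ) (hT : 0 ≤ T) :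
    ∃ u : ℝ → E', u 0 = x₀ ∧ ∀ t ∈ Icc (0:ℝ) T, HasDerivWithinAt u (F (u t)) (Icc (0:ℝ) T) t := by
  set h : ℝ := 1 / (2 * (L : ℝ) + 2) with hh
  have hL0 : (0:ℝ) ≤ L := L.coe_nonneg
  have hhpos : 0 < h := by positivity
  have hstep : ∀ n : ℕ, ∃ u : ℝ → E', u 0 = x₀ ∧
      ∀ t ∈ Icc (0:ℝ) (n * h), HasDerivWithinAt u (F (u t)) (Icc (0:ℝ) (n * h)) t := by
    intro n
    induction n with
    | zero =>
      refine ⟨fun _ => x₀, rfl, fun t ht => ?_⟩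
      simp only [Nat.cast_zero, zero_mul, Icc_self, mem_singleton_iff] at ht ⊢
      subst ht
      exact hasDerivWithinAt_singleton' _ _ _
    | succ n ih =>
      obtain ⟨u, hu0, hu⟩ := ih
      set b : ℝ := n * h with hb
      have hb0 : 0 ≤ b := by positivity
      -- Picard-Lindelöf on [b, b+h]
      set x₁ : E' := u b with hx₁
      set R : ℝ := 2 * h * (‖F x₁‖ + 1) with hR
      set C : ℝ := ‖F x₁‖ + L * R with hC
      have hRpos : 0 < R := by positivity
      have hCnn : 0 ≤ C := by positivity
      have hpl : IsPicardLindelof (fun _ x => F x) (tmin := b) (tmax := b + h)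
          ⟨b, ⟨le_rfl, by linarith⟩⟩ x₁ ⟨R, hRpos.le⟩ 0 ⟨C, hCnn⟩ L := by
        refine ⟨fun t _ => hF.lipschitzOnWith, fun x _ => continuousOn_const,
          fun t _ x hx => ?_, ?_⟩
        · have h1 : ‖F x - F x₁‖ ≤ (L:ℝ) * ‖x - x₁‖ := by
            have := hF.dist_le_mul x x₁
            simpa [dist_eq_norm] using this
          have h2 : ‖x - x₁‖ ≤ R := by
            have := Metric.mem_closedBall.1 hx
            rw [dist_eq_norm] at this
            exact this
          calc ‖F x‖ ≤ ‖F x - F x₁‖ + ‖F x₁‖ := by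
                simpa using norm_add_le (F x - F x₁) (F x₁)
            _ ≤ (L:ℝ) * R + ‖F x₁‖ := by
                have := mul_le_mul_of_nonneg_left h2 hL0
                linarith
            _ = C := by rw [hC]; ring
        · have hmax : max (b + h - b) (b - b) = h := by
            rw [max_eq_left (by linarith)]; ring
          simp only [NNReal.coe_mk, NNReal.coe_zero, sub_zero]
          rw [hmax]
          change C * h ≤ R
          have h2Lh : 2 * (L:ℝ) * h ≤ 1 := by
            rw [hh, mul_one_div, div_le_one (by positivity)]
            linarith
          have hFnn : 0 ≤ ‖F x₁‖ := norm_nonneg _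
          rw [hC, hR]
          nlinarith [hhpos.le]
      obtain ⟨f, hfb, hf⟩ := hpl.exists_eq_forall_mem_Icc_hasDerivWithinAt₀
      change f b = x₁ at hfb
      set g : ℝ → E' := fun s => if s ≤ b then u s else f s with hg
      refine ⟨g, by simp [hg, hb0, hu0], fun t ht => ?_⟩
      have hcast : ((n:ℝ) + 1) * h = b + h := by rw [hb]; ring
      have ht' : t ∈ Icc (0:ℝ) (b + h) := by
        have : ((n+1:ℕ):ℝ) * h = b + h := by push_cast; rw [hcast]
        rwa [this] at ht
      have hIcc : Icc (0:ℝ) (((n:ℕ)+1:ℕ) * h) = Icc (0:ℝ) (b + h) := by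
        push_cast; rw [hcast]
      rw [hIcc]
      rcases lt_trichotomy t b with hlt | heq | hgt
      · have hgt' : g t = u t := if_pos hlt.le
        have hmem : Icc (0:ℝ) b ∈ 𝓝[Icc (0:ℝ) (b+h)] t := by
          apply mem_nhdsWithin.2
          exact ⟨Iio b, isOpen_Iio, hlt, fun s hs => ⟨hs.2.1, (mem_Iio.1 hs.1).le⟩⟩
        have hd : HasDerivWithinAt u (F (u t)) (Icc (0:ℝ) (b+h)) t :=
          (hu t ⟨ht'.1, hlt.le⟩).mono_of_mem_nhdsWithin hmem
        rw [show F (g t) = F (u t) from by rw [hgt']]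
        refine hd.congr_of_eventuallyEq ?_ hgt'
        filter_upwards [nhdsWithin_le_nhds (Iio_mem_nhds hlt)] with s hs
        exact if_pos (mem_Iio.1 hs).le
      · subst heq
        have hgb : g b = u b := if_pos le_rfl
        have hd1 : HasDerivWithinAt g (F (u b)) (Icc (0:ℝ) b) b :=
          (hu b ⟨hb0, le_rfl⟩).congr (fun s hs => if_pos hs.2) hgb
        have hd2 : HasDerivWithinAt g (F (u b)) (Icc b (b+h)) b := by
          have h2 := hf b ⟨le_rfl, by linarith⟩
          rw [hfb] at h2
          refine h2.congr (fun s hs => ?_) (by rw [hgb, hfb])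
          rcases eq_or_lt_of_le hs.1 with rfl | hsb
          · rw [hgb, hfb]
          · exact if_neg (not_le.2 hsb)
        have hun := hd1.union hd2
        rw [Icc_union_Icc_eq_Icc hb0 (by linarith)] at hun
        rw [show F (g b) = F (u b) from by rw [hgb]]
        exact hun
      · have hgt' : g t = f t := if_neg (not_le.2 hgt)
        have hmem : Icc b (b+h) ∈ 𝓝[Icc (0:ℝ) (b+h)] t := by
          apply mem_nhdsWithin.2
          exact ⟨Ioi b, isOpen_Ioi, hgt, fun s hs => ⟨(mem_Ioi.1 hs.1).le, hs.2.2⟩⟩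
        have hd : HasDerivWithinAt f (F (f t)) (Icc (0:ℝ) (b+h)) t :=
          (hf t ⟨hgt.le, ht'.2⟩).mono_of_mem_nhdsWithin hmem
        rw [show F (g t) = F (f t) from by rw [hgt']]
        refine hd.congr_of_eventuallyEq ?_ hgt'
        filter_upwards [nhdsWithin_le_nhds (Ioi_mem_nhds hgt)] with s hs
        exact if_neg (not_le.2 (mem_Ioi.1 hs))
  obtain ⟨n, hn⟩ := exists_nat_ge (T / h)
  have hTn : T ≤ n * h := by
    rw [div_le_iff₀ hhpos] at hn; linarith
  obtain ⟨u, hu0, hu⟩ := hstep n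
  exact ⟨u, hu0, fun t ht => (hu t ⟨ht.1, ht.2.trans hTn⟩).mono (Icc_subset_Icc le_rfl hTn)⟩


lemma truncate_apply (u : BCF d) (r : ℝ) (x : EucSp d) :
    truncate u r x = max 0 (min (u x) r) := rfl

lemma truncate_nonneg (u : BCF d) (r : ℝ) (x : EucSp d) : 0 ≤ truncate u r x :=
  le_max_left _ _

lemma truncate_le (u : BCF d) {r : ℝ} (hr : 0 ≤ r) (x : EucSp d) : truncate u r x ≤ r :=
  max_le hr (min_le_right _ _)

lemma truncate_eq (u : BCF d) {r : ℝ} (h0 : ∀ x, 0 ≤ u x) (h1 : ∀ x, u x ≤ r) :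
    truncate u r = u := by
  ext x
  rw [truncate_apply, min_eq_left (h1 x), max_eq_right (h0 x)]

lemma norm_truncate_sub_truncate (u v : BCF d) (r : ℝ) :
    ‖truncate u r - truncate v r‖ ≤ ‖u - v‖ := by
  refine (BoundedContinuousFunction.norm_le (norm_nonneg _)).2 fun x => ?_
  simp only [BoundedContinuousFunction.coe_sub, Pi.sub_apply, truncate_apply,
    Real.norm_eq_abs]
  calc |max 0 (min (u x) r) - max 0 (min (v x) r)|
      = |max (min (u x) r) 0 - max (min (v x) r) 0| := by rw [max_comm, max_comm 0]
    _ ≤ |min (u x) r - min (v x) r| := abs_max_sub_max_le_abs _ _ _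
    _ ≤ max |u x - v x| |r - r| := abs_min_sub_min_le_max _ _ _ _
    _ ≤ |u x - v x| := by simp
    _ ≤ ‖u - v‖ := by
        have := BoundedContinuousFunction.norm_coe_le_norm (u - v) x
        simpa using this

lemma norm_truncate_le (u : BCF d) {r : ℝ} (hr : 0 ≤ r) : ‖truncate u r‖ ≤ ‖u‖ := by
  refine (BoundedContinuousFunction.norm_le (norm_nonneg _)).2 fun x => ?_
  rw [Real.norm_eq_abs, abs_of_nonneg (truncate_nonneg _ _ _), truncate_apply]
  refine max_le (norm_nonneg u) ((min_le_left _ _).trans ?_)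
  exact (le_abs_self _).trans (u.norm_coe_le_norm x)

lemma memTube_truncate (u : BCF d) {r : ℝ} (hr : 0 ≤ r) :
    ∀ x, 0 ≤ truncate u r x ∧ truncate u r x ≤ r :=
  fun x => ⟨truncate_nonneg u r x, truncate_le u hr x⟩


lemma norm_truncate_le' (u : BCF d) (r : ℝ) : ‖truncate u r‖ ≤ ‖u‖ := by
  refine (BoundedContinuousFunction.norm_le (norm_nonneg _)).2 fun x => ?_
  rw [Real.norm_eq_abs, abs_of_nonneg (truncate_nonneg _ _ _), truncate_apply]
  refine max_le (norm_nonneg u) ((min_le_left _ _).trans ?_)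
  exact (le_abs_self _).trans (u.norm_coe_le_norm x)

lemma eval_hasDerivAt {w : ℝ → BCF d} {D : BCF d} {t : ℝ} (x : EucSp d)
    (h : HasDerivAt w D t) : HasDerivAt (fun s => w s x) (D x) t :=
  ((BoundedContinuousFunction.evalCLM ℝ x).hasFDerivAt.comp_hasDerivAt t h :)

lemma eval_continuousOn {w : ℝ → BCF d} {s : Set ℝ} (x : EucSp d)
    (h : ContinuousOn w s) : ContinuousOn (fun t => w t x) s :=
  (BoundedContinuousFunction.lipschitz_eval_const x).continuous.comp_continuousOn h

lemma sol_nonneg (T m : ℝ) (hT : 0 < T) (hm : 0 < m)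
    (w w' : ℝ → BCF d)
    (hwc : ContinuousOn w (Set.Icc 0 T))
    (hwd : ∀ t ∈ Set.Ioo (0:ℝ) T, HasDerivAt w (w' t) t)
    (hlb : ∀ t ∈ Set.Ioo (0:ℝ) T, ∀ x, w t x < 0 → -(m * w t x) ≤ w' t x)
    (h0 : ∀ x, 0 ≤ w 0 x) :
    ∀ t ∈ Set.Icc (0:ℝ) T, ∀ x, 0 ≤ w t x := by
  intro t₁ ht₁ x
  by_contra hneg
  push_neg at hneg
  set f : ℝ → ℝ := fun t => w t x with hfdef
  have hfc : ContinuousOn f (Icc 0 T) := eval_continuousOn x hwc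
  set S : Set ℝ := Icc 0 t₁ ∩ f ⁻¹' (Ici 0) with hSdef
  have hsub1 : Icc (0:ℝ) t₁ ⊆ Icc 0 T := Icc_subset_Icc le_rfl ht₁.2
  have hS0 : (0:ℝ) ∈ S := ⟨⟨le_rfl, ht₁.1⟩, h0 x⟩
  have hSbdd : BddAbove S := ⟨t₁, fun r hr => hr.1.2⟩
  have hSclosed : IsClosed S :=
    (hfc.mono hsub1).preimage_isClosed_of_isClosed isClosed_Icc isClosed_Ici
  set s := sSup S with hs
  have hsS : s ∈ S := hSclosed.csSup_mem ⟨0, hS0⟩ hSbdd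
  have hfs : 0 ≤ f s := hsS.2
  have hs0 : 0 ≤ s := hsS.1.1
  have hst : s ≤ t₁ := hsS.1.2
  have hslt : s < t₁ :=
    lt_of_le_of_ne hst fun heq => absurd (heq ▸ hfs) (not_le.2 hneg)
  have hnegIoc : ∀ r ∈ Ioc s t₁, f r < 0 := by
    intro r hr
    by_contra hge
    push_neg at hge
    exact absurd (le_csSup hSbdd (⟨⟨hs0.trans hr.1.le, hr.2⟩, hge⟩ : r ∈ S))
      (not_le.2 hr.1)
  have hmono : MonotoneOn (fun t => Real.exp (m * t) * f t) (Icc s t₁) := by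
    apply monotoneOn_of_hasDerivWithinAt_nonneg (convex_Icc s t₁)
      (f' := fun r => Real.exp (m * r) * m * f r + Real.exp (m * r) * w' r x)
    · exact (Real.continuous_exp.comp (continuous_const.mul continuous_id)).continuousOn.mul
        (hfc.mono ((Icc_subset_Icc hs0 ht₁.2)))
    · intro r hr
      rw [interior_Icc] at hr
      have hrT : r ∈ Ioo (0:ℝ) T := ⟨hs0.trans_lt hr.1, hr.2.trans_le ht₁.2⟩
      have he : HasDerivAt (fun t => Real.exp (m * t)) (Real.exp (m * r) * m) r := by
        simpa using ((hasDerivAt_id r).const_mul m).exp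
      exact ((he.mul (eval_hasDerivAt x (hwd r hrT))).congr_deriv
        (by ring)).hasDerivWithinAt
    · intro r hr
      rw [interior_Icc] at hr
      have hrT : r ∈ Ioo (0:ℝ) T := ⟨hs0.trans_lt hr.1, hr.2.trans_le ht₁.2⟩
      have hfr : f r < 0 := hnegIoc r ⟨hr.1, hr.2.le⟩
      have := hlb r hrT x hfr
      have hep := Real.exp_pos (m * r)
      nlinarith
  have hmle : Real.exp (m * s) * f s ≤ Real.exp (m * t₁) * f t₁ :=
    hmono (left_mem_Icc.2 hst) (right_mem_Icc.2 hst) hst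
  have he1 := Real.exp_pos (m * s)
  have he2 := Real.exp_pos (m * t₁)
  have h3 : 0 ≤ Real.exp (m * s) * f s := mul_nonneg he1.le hfs
  have h4 : Real.exp (m * t₁) * f t₁ < 0 := mul_neg_of_pos_of_neg he2 hneg
  linarith

lemma apriori_bound (T C₀ κ : ℝ) (hT : 0 < T) (hκ : 0 < κ) (hC₀ : 0 ≤ C₀)
    (w w' : ℝ → BCF d)
    (hwc : ContinuousOn w (Set.Icc 0 T))
    (hwd : ∀ t ∈ Set.Ioo (0:ℝ) T, HasDerivAt w (w' t) t)
    (hwb : ∀ t ∈ Set.Ioo (0:ℝ) T, ∀ x, w' t x ≤ C₀ + κ * ‖w t‖)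
    (hpos : ∀ t ∈ Set.Icc (0:ℝ) T, ∀ x, 0 ≤ w t x) :
    ∀ t ∈ Set.Icc (0:ℝ) T, ‖w t‖ ≤ (‖w 0‖ + C₀ / κ) * Real.exp (κ * T) := by
  set θ : ℝ → ℝ := fun s => min (max s 0) T with hθdef
  have hθc : Continuous θ := (continuous_id.max continuous_const).min continuous_const
  have hθmem : ∀ s, θ s ∈ Icc (0:ℝ) T :=
    fun s => ⟨le_min (le_max_right s 0) hT.le, min_le_right _ _⟩
  have hθeq : ∀ s ∈ Icc (0:ℝ) T, θ s = s := fun s hs => by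
    rw [hθdef]; simp only [max_eq_left hs.1, min_eq_left hs.2]
  set ψ : ℝ → ℝ := fun s => ‖w (θ s)‖ with hψdef
  have hψc : Continuous ψ :=
    continuous_norm.comp (hwc.comp_continuous hθc hθmem)
  have hψ0 : ∀ s, 0 ≤ ψ s := fun s => norm_nonneg _
  have hψeq : ∀ s ∈ Icc (0:ℝ) T, ψ s = ‖w s‖ := fun s hs => by rw [hψdef]; simp [hθeq s hs]
  set I : ℝ → ℝ := fun t => ∫ s in (0:ℝ)..t, (C₀ + κ * ψ s) with hIdef
  have hIcont : Continuous (fun s => C₀ + κ * ψ s) := continuous_const.add (continuous_const.mul hψc)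
  have hI : ∀ t, HasDerivAt I (C₀ + κ * ψ t) t :=
    fun t => (hIcont.integral_hasStrictDerivAt 0 t).hasDerivAt
  have hIc : Continuous I := by
    rw [continuous_iff_continuousAt]; exact fun t => (hI t).continuousAt
  have hInn : ∀ t ∈ Icc (0:ℝ) T, 0 ≤ I t := fun t ht =>
    intervalIntegral.integral_nonneg ht.1 (fun s _ => by positivity)
  have hI0 : I 0 = 0 := intervalIntegral.integral_same
  -- step 1
  have step1 : ∀ t ∈ Icc (0:ℝ) T, ‖w t‖ ≤ ‖w 0‖ + I t := by
    intro t ht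
    refine (BoundedContinuousFunction.norm_le (by have := hInn t ht; positivity)).2 fun x => ?_
    rw [Real.norm_eq_abs, abs_of_nonneg (hpos t ht x)]
    have hmono : MonotoneOn (fun s => I s - w s x) (Icc 0 T) := by
      apply monotoneOn_of_hasDerivWithinAt_nonneg (convex_Icc 0 T)
        (f' := fun s => (C₀ + κ * ψ s) - w' s x)
      · exact hIc.continuousOn.sub (eval_continuousOn x hwc)
      · intro r hr
        rw [interior_Icc] at hr
        exact ((hI r).sub (eval_hasDerivAt x (hwd r hr))).hasDerivWithinAt
      · intro r hr
        rw [interior_Icc] at hr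
        have := hwb r hr x
        rw [← hψeq r ⟨hr.1.le, hr.2.le⟩] at this
        linarith
    have := hmono (left_mem_Icc.2 hT.le) ht ht.1
    have hw0 : w 0 x ≤ ‖w 0‖ := by
      have := BoundedContinuousFunction.norm_coe_le_norm (w 0) x
      rw [Real.norm_eq_abs] at this
      exact (le_abs_self _).trans this
    simp only [hI0] at this
    linarith
  have hψΦ : ∀ t ∈ Icc (0:ℝ) T, ψ t ≤ ‖w 0‖ + I t := fun t ht => by
    rw [hψeq t ht]; exact step1 t ht
  -- step 2 : Gronwall
  have hgron : ∀ t ∈ Icc (0:ℝ) T,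
      ‖(fun t => ‖w 0‖ + I t) t‖ ≤ gronwallBound ‖w 0‖ κ C₀ (t - 0) := by
    apply norm_le_gronwallBound_of_norm_deriv_right_le
      (f' := fun t => C₀ + κ * ψ t)
    · exact (continuous_const.add hIc).continuousOn
    · exact fun t _ => ((hI t).const_add ‖w 0‖).hasDerivWithinAt
    · simp [hI0]
    · intro t ht
      have h1 := hψΦ t ⟨ht.1, ht.2.le⟩
      have h2 : 0 ≤ ‖w 0‖ + I t := by have := hInn t ⟨ht.1, ht.2.le⟩; positivity
      rw [Real.norm_eq_abs, Real.norm_eq_abs, abs_of_nonneg (by positivity : (0:ℝ) ≤ C₀ + κ * ψ t),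
        abs_of_nonneg h2]
      nlinarith
  intro t ht
  have h1 := step1 t ht
  have h2 := hgron t ht
  have h3 : 0 ≤ ‖w 0‖ + I t := by have := hInn t ht; positivity
  rw [Real.norm_eq_abs, abs_of_nonneg h3] at h2
  have h4 : gronwallBound ‖w 0‖ κ C₀ (t - 0) ≤ (‖w 0‖ + C₀ / κ) * Real.exp (κ * T) := by
    rw [gronwallBound_of_K_ne_0 hκ.ne']
    have he1 : Real.exp (κ * (t - 0)) ≤ Real.exp (κ * T) := by
      apply Real.exp_le_exp.2
      have := ht.2; nlinarith
    have he2 : 0 < Real.exp (κ * (t - 0)) := Real.exp_pos _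
    have hCκ : 0 ≤ C₀ / κ := by positivity
    have hw0 : 0 ≤ ‖w 0‖ := norm_nonneg _
    nlinarith
  linarith

end AuxiliaryLemmas

open scoped NNReal


/-- Existence and uniqueness for the generalized equation `∂ₜu = Au − mu − u·Gu`
(Theorem `exist_uniq_BUC`). -/
theorem statement1 (d : ℕ) (hd : 1 ≤ d) (m : ℝ) (hm : 0 < m)
    (A G : BCF d → BCF d)
    (hApos : ∀ v : BCF d, (∀ x, 0 ≤ v x) → ∀ x, 0 ≤ A v x)
    (hGpos : ∀ v : BCF d, (∀ x, 0 ≤ v x) → ∀ x, 0 ≤ G v x)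
    (κ : ℝ) (hκ : 0 < κ)
    (hAlip : ∀ v w : BCF d, (∀ x, 0 ≤ v x) → (∀ x, 0 ≤ w x) →
      ‖A v - A w‖ ≤ κ * ‖v - w‖)
    (κ₀ : ℝ) (hκ₀ : 0 < κ₀)
    (hGlip : ∀ r > (0 : ℝ), ∀ v w : BCF d, memTube r v → memTube r w →
      ‖G v - G w‖ ≤ Real.exp (κ₀ * r) * ‖v - w‖)
    (T : ℝ) (hT : 0 < T) (u₀ : BCF d) (hu₀ : ∀ x, 0 ≤ u₀ x) :
    (∃ u : ℝ → BCF d, IsSolOnGen A G m T u ∧ u 0 = u₀ ∧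
      ∀ t ∈ Set.Icc (0 : ℝ) T, ∀ x, 0 ≤ u t x) ∧
    ∀ u v : ℝ → BCF d,
      IsSolOnGen A G m T u → u 0 = u₀ → (∀ t ∈ Set.Icc (0 : ℝ) T, ∀ x, 0 ≤ u t x) →
      IsSolOnGen A G m T v → v 0 = u₀ → (∀ t ∈ Set.Icc (0 : ℝ) T, ∀ x, 0 ≤ v t x) →
      Set.EqOn u v (Set.Icc 0 T) := by
  -- basic constants
  set C₀ : ℝ := ‖A 0‖ with hC₀def
  have hC₀ : 0 ≤ C₀ := norm_nonneg _
  set R' : ℝ := (‖u₀‖ + C₀ / κ) * Real.exp (κ * T) + 1 with hR'def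
  have hR'pos : 0 < R' := by positivity
  have hnormA : ∀ v : BCF d, (∀ x, 0 ≤ v x) → ‖A v‖ ≤ C₀ + κ * ‖v‖ := by
    intro v hv
    calc ‖A v‖ ≤ ‖A v - A 0‖ + ‖A 0‖ := by
          simpa using norm_add_le (A v - A 0) (A 0)
      _ ≤ κ * ‖v - 0‖ + C₀ := by
          have := hAlip v 0 hv (fun x => by simp)
          simp only [hC₀def]; linarith
      _ = C₀ + κ * ‖v‖ := by rw [sub_zero]; ring
  have htube0 : memTube R' (0 : BCF d) := fun x => by simp [hR'pos.le]
  have hnorm_of_tube : ∀ v : BCF d, memTube R' v → ‖v‖ ≤ R' := by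
    intro v hv
    refine (BoundedContinuousFunction.norm_le hR'pos.le).2 fun x => ?_
    rw [Real.norm_eq_abs, abs_of_nonneg (hv x).1]
    exact (hv x).2
  set M : ℝ := ‖G 0‖ + Real.exp (κ₀ * R') * R' with hMdef
  have hM0 : 0 ≤ M := by positivity
  have hGnorm : ∀ v : BCF d, memTube R' v → ‖G v‖ ≤ M := by
    intro v hv
    calc ‖G v‖ ≤ ‖G v - G 0‖ + ‖G 0‖ := by
          simpa using norm_add_le (G v - G 0) (G 0)
      _ ≤ Real.exp (κ₀ * R') * ‖v - 0‖ + ‖G 0‖ :=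
          add_le_add_left (hGlip R' hR'pos v 0 hv htube0) _
      _ ≤ M := by
          rw [sub_zero, hMdef]
          have h1 := hnorm_of_tube v hv
          have h2 := Real.exp_pos (κ₀ * R')
          nlinarith
  -- the truncated vector field
  set χ : BCF d → BCF d := fun v => truncate v R' with hχdef
  have hχtube : ∀ v, memTube R' (χ v) := fun v x =>
    ⟨truncate_nonneg v R' x, truncate_le v hR'pos.le x⟩
  have hχnonneg : ∀ v x, 0 ≤ χ v x := fun v x => truncate_nonneg v R' x
  set F : BCF d → BCF d := fun v => A (χ v) - m • v - χ v * G (χ v) with hFdef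
  have hFx : ∀ v x, F v x = A (χ v) x - m * v x - χ v x * G (χ v) x := by
    intro v x
    simp [hFdef]
  set L0 : ℝ := κ + m + (M + R' * Real.exp (κ₀ * R')) with hL0def
  have hL0pos : 0 < L0 := by positivity
  have hFlip : ∀ v w : BCF d, ‖F v - F w‖ ≤ L0 * ‖v - w‖ := by
    intro v w
    have hsplit : F v - F w = (A (χ v) - A (χ w)) - m • (v - w)
        - ((χ v - χ w) * G (χ v) + χ w * (G (χ v) - G (χ w))) := by
      ext x
      simp [hFdef]
      ring
    have hχ : ‖χ v - χ w‖ ≤ ‖v - w‖ := norm_truncate_sub_truncate v w R'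
    have h1 : ‖A (χ v) - A (χ w)‖ ≤ κ * ‖v - w‖ :=
      le_trans (hAlip _ _ (hχnonneg v) (hχnonneg w))
        (mul_le_mul_of_nonneg_left hχ hκ.le)
    have h2 : ‖m • (v - w)‖ ≤ m * ‖v - w‖ :=
      (norm_smul_le m (v - w)).trans (by rw [Real.norm_eq_abs, abs_of_pos hm])
    have h3 : ‖(χ v - χ w) * G (χ v)‖ ≤ M * ‖v - w‖ := by
      calc ‖(χ v - χ w) * G (χ v)‖ ≤ ‖χ v - χ w‖ * ‖G (χ v)‖ := norm_mul_le _ _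
        _ ≤ ‖v - w‖ * M :=
            mul_le_mul hχ (hGnorm _ (hχtube v)) (norm_nonneg _) (norm_nonneg _)
        _ = M * ‖v - w‖ := mul_comm _ _
    have h4 : ‖χ w * (G (χ v) - G (χ w))‖ ≤ R' * Real.exp (κ₀ * R') * ‖v - w‖ := by
      calc ‖χ w * (G (χ v) - G (χ w))‖ ≤ ‖χ w‖ * ‖G (χ v) - G (χ w)‖ := norm_mul_le _ _
        _ ≤ R' * (Real.exp (κ₀ * R') * ‖χ v - χ w‖) := by
            apply mul_le_mul (hnorm_of_tube _ (hχtube w))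
              (hGlip R' hR'pos _ _ (hχtube v) (hχtube w)) (norm_nonneg _) hR'pos.le
        _ ≤ R' * Real.exp (κ₀ * R') * ‖v - w‖ := by
            rw [mul_assoc]
            apply mul_le_mul_of_nonneg_left _ hR'pos.le
            exact mul_le_mul_of_nonneg_left hχ (Real.exp_pos _).le
    calc ‖F v - F w‖ ≤ ‖A (χ v) - A (χ w)‖ + ‖m • (v - w)‖
          + (‖(χ v - χ w) * G (χ v)‖ + ‖χ w * (G (χ v) - G (χ w))‖) := by
          rw [hsplit]
          exact le_trans (norm_sub_le _ _) (add_le_add (norm_sub_le _ _) (norm_add_le _ _))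
      _ ≤ κ * ‖v - w‖ + m * ‖v - w‖ + (M * ‖v - w‖ + R' * Real.exp (κ₀ * R') * ‖v - w‖) :=
          add_le_add (add_le_add h1 h2) (add_le_add h3 h4)
      _ = L0 * ‖v - w‖ := by rw [hL0def]; ring
  set L : ℝ≥0 := Real.toNNReal L0 with hLdef
  have hLcoe : (L : ℝ) = L0 := Real.coe_toNNReal _ hL0pos.le
  have hFW : LipschitzWith L F := by
    apply LipschitzWith.of_dist_le_mul
    intro v w
    rw [dist_eq_norm, dist_eq_norm, hLcoe]
    exact hFlip v w
  -- existence
  obtain ⟨u, hu0, hud⟩ := exists_global_solution F L hFW u₀ T hT.le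
  have hucont : ContinuousOn u (Set.Icc 0 T) := fun t ht =>
    (hud t ht).continuousWithinAt
  have huAt : ∀ t ∈ Set.Ioo (0:ℝ) T, HasDerivAt u (F (u t)) t := fun t ht =>
    (hud t ⟨ht.1.le, ht.2.le⟩).hasDerivAt (Icc_mem_nhds ht.1 ht.2)
  have hχzero : ∀ (v : BCF d) (x : EucSp d), v x < 0 → χ v x = 0 := by
    intro v x hvx
    show truncate v R' x = 0
    rw [truncate_apply, min_eq_left (hvx.le.trans hR'pos.le),
      max_eq_left hvx.le]
  have hupos : ∀ t ∈ Set.Icc (0:ℝ) T, ∀ x, 0 ≤ u t x := by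
    apply sol_nonneg T m hT hm u (fun t => F (u t)) hucont huAt
    · intro t ht x hx
      rw [hFx, hχzero (u t) x hx, zero_mul, sub_zero]
      have := hApos (χ (u t)) (hχnonneg (u t)) x
      linarith
    · rw [hu0]; exact hu₀
  have huF : ∀ t ∈ Set.Ioo (0:ℝ) T, ∀ x, F (u t) x ≤ C₀ + κ * ‖u t‖ := by
    intro t ht x
    rw [hFx]
    have h1 : 0 ≤ m * u t x := mul_nonneg hm.le (hupos t ⟨ht.1.le, ht.2.le⟩ x)
    have h2 : 0 ≤ χ (u t) x * G (χ (u t)) x :=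
      mul_nonneg (hχnonneg _ x) (hGpos _ (hχnonneg _) x)
    have h3 : A (χ (u t)) x ≤ ‖A (χ (u t))‖ := by
      have := BoundedContinuousFunction.norm_coe_le_norm (A (χ (u t))) x
      rw [Real.norm_eq_abs] at this
      exact (le_abs_self _).trans this
    have h4 : ‖A (χ (u t))‖ ≤ C₀ + κ * ‖χ (u t)‖ := hnormA _ (hχnonneg _)
    have h5 : ‖χ (u t)‖ ≤ ‖u t‖ := norm_truncate_le' _ _
    nlinarith
  have hubd : ∀ t ∈ Set.Icc (0:ℝ) T, ‖u t‖ ≤ R' - 1 := by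
    intro t ht
    have := apriori_bound T C₀ κ hT hκ hC₀ u (fun t => F (u t)) hucont huAt huF hupos t ht
    rw [hu0] at this
    rw [hR'def]
    linarith
  have hutube : ∀ t ∈ Set.Icc (0:ℝ) T, memTube R' (u t) := by
    intro t ht x
    refine ⟨hupos t ht x, ?_⟩
    have h1 : u t x ≤ ‖u t‖ := by
      have := BoundedContinuousFunction.norm_coe_le_norm (u t) x
      rw [Real.norm_eq_abs] at this
      exact (le_abs_self _).trans this
    have := hubd t ht
    linarith
  have hχu : ∀ t ∈ Set.Icc (0:ℝ) T, χ (u t) = u t := by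
    intro t ht
    exact truncate_eq (u t) (fun x => (hutube t ht x).1) (fun x => (hutube t ht x).2)
  -- uniqueness preliminary : any nonneg solution is in the tube
  have hsolbd : ∀ (w : ℝ → BCF d) (w' : ℝ → BCF d),
      ContinuousOn w (Set.Icc 0 T) →
      (∀ t ∈ Set.Ioc (0 : ℝ) T, HasDerivWithinAt w (w' t) (Set.Ioc 0 T) t ∧
        ∀ x, w' t x = A (w t) x - m * w t x - w t x * G (w t) x) →
      w 0 = u₀ → (∀ t ∈ Set.Icc (0:ℝ) T, ∀ x, 0 ≤ w t x) →
      (∀ t ∈ Set.Ioo (0:ℝ) T, HasDerivAt w (w' t) t) ∧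
        ∀ t ∈ Set.Icc (0:ℝ) T, memTube R' (w t) := by
    intro w w' hwc hwd hw0 hwpos
    have hwAt : ∀ t ∈ Set.Ioo (0:ℝ) T, HasDerivAt w (w' t) t := by
      intro t ht
      exact ((hwd t ⟨ht.1, ht.2.le⟩).1).hasDerivAt
        (mem_of_superset (Ioo_mem_nhds ht.1 ht.2) Set.Ioo_subset_Ioc_self)
    refine ⟨hwAt, ?_⟩
    have hwb : ∀ t ∈ Set.Ioo (0:ℝ) T, ∀ x, w' t x ≤ C₀ + κ * ‖w t‖ := by
      intro t ht x
      rw [(hwd t ⟨ht.1, ht.2.le⟩).2 x]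
      have htI : t ∈ Set.Icc (0:ℝ) T := ⟨ht.1.le, ht.2.le⟩
      have h1 : 0 ≤ m * w t x := mul_nonneg hm.le (hwpos t htI x)
      have h2 : 0 ≤ w t x * G (w t) x :=
        mul_nonneg (hwpos t htI x) (hGpos _ (hwpos t htI) x)
      have h3 : A (w t) x ≤ ‖A (w t)‖ := by
        have := BoundedContinuousFunction.norm_coe_le_norm (A (w t)) x
        rw [Real.norm_eq_abs] at this
        exact (le_abs_self _).trans this
      have h4 : ‖A (w t)‖ ≤ C₀ + κ * ‖w t‖ := hnormA _ (hwpos t htI)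
      linarith
    intro t ht x
    have hbd := apriori_bound T C₀ κ hT hκ hC₀ w w' hwc hwAt hwb hwpos t ht
    rw [hw0] at hbd
    refine ⟨hwpos t ht x, ?_⟩
    have h1 : w t x ≤ ‖w t‖ := by
      have := BoundedContinuousFunction.norm_coe_le_norm (w t) x
      rw [Real.norm_eq_abs] at this
      exact (le_abs_self _).trans this
    rw [hR'def]
    linarith
  constructor
  · -- existence package
    refine ⟨u, ⟨hucont, fun t => F (u t), ?_, fun t ht => ⟨?_, fun x => ?_⟩⟩, hu0,
      hupos⟩
    · exact (hFW.continuous.comp_continuousOn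
        (hucont.mono Set.Ioc_subset_Icc_self))
    · exact (hud t (Set.Ioc_subset_Icc_self ht)).mono Set.Ioc_subset_Icc_self
    · rw [hFx, hχu t (Set.Ioc_subset_Icc_self ht)]
  · -- uniqueness
    intro u1 v1 hsol1 h10 h1pos hsol2 h20 h2pos
    obtain ⟨h1c, u1', h1'c, h1d⟩ := hsol1
    obtain ⟨h2c, v1', h2'c, h2d⟩ := hsol2
    obtain ⟨h1At, h1tube⟩ := hsolbd u1 u1' h1c h1d h10 h1pos
    obtain ⟨h2At, h2tube⟩ := hsolbd v1 v1' h2c h2d h20 h2pos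
    have hder : ∀ (w : ℝ → BCF d) (w' : ℝ → BCF d),
        (∀ t ∈ Set.Ioc (0 : ℝ) T, HasDerivWithinAt w (w' t) (Set.Ioc 0 T) t ∧
          ∀ x, w' t x = A (w t) x - m * w t x - w t x * G (w t) x) →
        (∀ t ∈ Set.Icc (0:ℝ) T, memTube R' (w t)) →
        (∀ t ∈ Set.Ioo (0:ℝ) T, HasDerivAt w (w' t) t) →
        ∀ t ∈ Set.Ioo (0:ℝ) T, HasDerivAt w (F (w t)) t := by
      intro w w' hwd htube hAt t ht
      have heq : w' t = F (w t) := by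
        ext x
        rw [(hwd t ⟨ht.1, ht.2.le⟩).2 x, hFx]
        have hχw : χ (w t) = w t :=
          truncate_eq (w t) (fun x => (htube t ⟨ht.1.le, ht.2.le⟩ x).1)
            (fun x => (htube t ⟨ht.1.le, ht.2.le⟩ x).2)
        rw [hχw]
      rw [← heq]
      exact hAt t ht
    have h1F := hder u1 u1' h1d h1tube h1At
    have h2F := hder v1 v1' h2d h2tube h2At
    intro t ht
    rcases eq_or_lt_of_le ht.1 with rfl | htpos
    · rw [h10, h20]
    · -- Gronwall on [ε, t]
      have hkey : ∀ ε ∈ Set.Ioo (0:ℝ) t, ‖u1 t - v1 t‖ ≤ ‖u1 ε - v1 ε‖ * Real.exp (L0 * T) := by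
        intro ε hε
        have hεT : ε < T := hε.2.trans_le ht.2
        have hgr := norm_le_gronwallBound_of_norm_deriv_right_le
          (f := fun s => u1 s - v1 s) (f' := fun s => F (u1 s) - F (v1 s))
          (δ := ‖u1 ε - v1 ε‖) (K := L0) (ε := 0) (a := ε) (b := t)
          ((h1c.mono (Set.Icc_subset_Icc hε.1.le ht.2)).sub
            (h2c.mono (Set.Icc_subset_Icc hε.1.le ht.2)))
          (fun s hs => by
            have hsT : s ∈ Set.Ioo (0:ℝ) T :=
              ⟨hε.1.trans_le hs.1, hs.2.trans_le ht.2⟩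
            exact ((h1F s hsT).sub (h2F s hsT)).hasDerivWithinAt)
          le_rfl
          (fun s hs => by
            rw [add_zero]
            exact hFlip (u1 s) (v1 s))
        have := hgr t ⟨hε.2.le, le_rfl⟩
        rw [gronwallBound_ε0] at this
        refine this.trans ?_
        apply mul_le_mul_of_nonneg_left _ (norm_nonneg _)
        apply Real.exp_le_exp.2
        have h1 : t - ε ≤ T := by
          have := ht.2; have := hε.1; linarith
        nlinarith [hL0pos.le]
      have hne : (𝓝[Set.Ioo (0:ℝ) t] 0).NeBot := by
        apply mem_closure_iff_nhdsWithin_neBot.1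
        rw [closure_Ioo htpos.ne]
        exact ⟨le_rfl, htpos.le⟩
      have hlim : Tendsto (fun ε => ‖u1 ε - v1 ε‖ * Real.exp (L0 * T))
          (𝓝[Set.Ioo (0:ℝ) t] 0) (𝓝 0) := by
        have hc : ContinuousWithinAt (fun ε => ‖u1 ε - v1 ε‖ * Real.exp (L0 * T))
            (Set.Icc 0 T) 0 := by
          apply ContinuousWithinAt.mul _ continuousWithinAt_const
          exact (ContinuousWithinAt.norm ((h1c.sub h2c) 0 ⟨le_rfl, hT.le⟩))
        have h0 : ‖u1 0 - v1 0‖ * Real.exp (L0 * T) = 0 := by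
          rw [h10, h20, sub_self, norm_zero, zero_mul]
        have := hc.tendsto
        rw [h0] at this
        exact this.mono_left (nhdsWithin_mono 0 (fun s hs => ⟨hs.1.le, hs.2.le.trans ht.2⟩))
      have hle : ‖u1 t - v1 t‖ ≤ 0 := by
        apply ge_of_tendsto hlim
        filter_upwards [self_mem_nhdsWithin] with ε hε
        exact hkey ε hε
      have := norm_le_zero_iff.1 hle
      exact sub_eq_zero.1 this

end
end

section
/- Let (r_n)_{n∈ℕ} be a sequence of real numbers with r₁ > 0 satisfying the recurrence r_{n+1} = r_n + p e^{−q r_n} for all n ∈ ℕ, where p, q > 0. Then the series ∑_{n∈ℕ} 1/(r_n e^{q r_n}) diverges. -/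
open Filter Topology MeasureTheory

noncomputable section

/-- Lemma `recurrence_sequence`: if `r_{n+1} = r_n + p e^{−q r_n}` with `r₀ > 0`
and `p, q > 0`, then `∑ 1/(r_n e^{q r_n})` diverges. -/
theorem statement2 (p q : ℝ) (hp : 0 < p) (hq : 0 < q)
    (r : ℕ → ℝ) (hr0 : 0 < r 0)
    (hrec : ∀ n : ℕ, r (n + 1) = r n + p * Real.exp (-(q * r n))) :
    ¬ Summable (fun n : ℕ => 1 / (r n * Real.exp (q * r n))) := by
  intro hsum
  set a : ℕ → ℝ := fun n => 1 / (r n * Real.exp (q * r n)) with ha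
  have hpos : ∀ n, 0 < r n := by
    intro n; induction n with
    | zero => exact hr0
    | succ k ih => rw [hrec k]; positivity
  have hmono : Monotone r := by
    apply monotone_nat_of_le_succ
    intro n
    rw [hrec n]
    nlinarith [Real.exp_pos (-(q * r n))]
  have htop : Tendsto r atTop atTop := by
    rcases tendsto_of_monotone hmono with h | ⟨l, hl⟩
    · exact h
    · exfalso
      have h1 : Tendsto (fun n => r (n + 1) - r n) atTop (𝓝 (l - l)) :=
        (hl.comp (tendsto_add_atTop_nat 1)).sub hl
      rw [sub_self] at h1
      have h2 : Tendsto (fun n => p * Real.exp (-(q * r n))) atTop (𝓝 0) := by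
        apply h1.congr; intro n; rw [hrec n]; ring
      have h3 : Tendsto (fun n => p * Real.exp (-(q * r n))) atTop
          (𝓝 (p * Real.exp (-(q * l)))) :=
        (Real.continuous_exp.continuousAt.tendsto.comp ((hl.const_mul q).neg)).const_mul p
      have := tendsto_nhds_unique h2 h3
      nlinarith [Real.exp_pos (-(q * l))]
  have hanneg : ∀ n, 0 ≤ a n := by
    intro n
    have := hpos n
    have := Real.exp_pos (q * r n)
    positivity
  have hstep : ∀ i, Real.log (r (i + 1)) - Real.log (r i) ≤ p * a i := by
    intro i
    have h1 : Real.log (r (i + 1)) - Real.log (r i) = Real.log (r (i + 1) / r i) :=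
      (Real.log_div (hpos _).ne' (hpos _).ne').symm
    have h2 : Real.log (r (i + 1) / r i) ≤ r (i + 1) / r i - 1 :=
      Real.log_le_sub_one_of_pos (by have := hpos (i+1); have := hpos i; positivity)
    have h3 : r (i + 1) / r i - 1 = p * a i := by
      rw [hrec i, ha]
      have hri := (hpos i).ne'
      have hexp := (Real.exp_pos (q * r i)).ne'
      field_simp [Real.exp_neg]
      ring_nf
      rw [mul_assoc, ← Real.exp_add]; simp
    linarith
  have hbound : ∀ n, Real.log (r n) ≤ p * (∑' k, a k) + Real.log (r 0) := by
    intro n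
    have htel : Real.log (r n) - Real.log (r 0) ≤ p * ∑ i ∈ Finset.range n, a i := by
      calc Real.log (r n) - Real.log (r 0)
          = ∑ i ∈ Finset.range n, (Real.log (r (i + 1)) - Real.log (r i)) :=
            (Finset.sum_range_sub (fun i => Real.log (r i)) n).symm
        _ ≤ ∑ i ∈ Finset.range n, p * a i := Finset.sum_le_sum (fun i _ => hstep i)
        _ = p * ∑ i ∈ Finset.range n, a i := (Finset.mul_sum _ _ _).symm
    have hts : ∑ i ∈ Finset.range n, a i ≤ ∑' k, a k :=
      Summable.sum_le_tsum _ (fun i _ => hanneg i) hsum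
    nlinarith
  have hlt := (Real.tendsto_log_atTop.comp htop).eventually_gt_atTop
      (p * (∑' k, a k) + Real.log (r 0))
  obtain ⟨n, hn⟩ := hlt.exists
  exact absurd (hbound n) (not_le.mpr hn)

end
end

section
/- Let H : E → E and h, p, r > 0 be such that ‖Hw − Hv‖ ≤ h‖w − v‖ for all w, v ∈ E_r^+, and Hv + pv ≤ Hw + pw whenever v ≤ w with v, w ∈ E_r^+. Fix T > 0 and define, for u ∈ Y_T, (F_r u)(x,t) := ∂u/∂t(x,t) − H(0 ∨ u ∧ r)(x,t). Suppose u₁, u₂ ∈ Y_T satisfy 0 ≤ u₁(x,t) ≤ r and 0 ≤ u₂(x,t) ≤ r for all (x,t) ∈ ℝ^d × (0,T], (F_r u₁)(x,t) ≤ (F_r u₂)(x,t) for all (x,t) ∈ ℝ^d × (0,T], and u₁(x,0) ≤ u₂(x,0) for all x ∈ ℝ^d. Then u₁(x,t) ≤ u₂(x,t) for all (x,t) ∈ ℝ^d × [0,T]. -/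
open MeasureTheory Filter Topology
open scoped RealInnerProductSpace

noncomputable section

variable {d : ℕ}

private lemma truncate_eq_self {d : ℕ} {v : BCF d} {r : ℝ} (hv : memTube r v) :
    truncate v r = v := by
  ext x
  simp only [truncate, BoundedContinuousFunction.coe_ofNormedAddCommGroup]
  rw [min_eq_left (hv x).2, max_eq_right (hv x).1]

set_option maxHeartbeats 1000000 in
/-- Abstract comparison principle (Theorem `compar_pr`). -/
theorem statement4 (d : ℕ) (hd : 1 ≤ d)
    (H : BCF d → BCF d) (h p r T : ℝ)
    (hh : 0 < h) (hp : 0 < p) (hr : 0 < r) (hT : 0 < T)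
    (hHlip : ∀ v w : BCF d, memTube r v → memTube r w → ‖H w - H v‖ ≤ h * ‖w - v‖)
    (hHmono : ∀ v w : BCF d, memTube r v → memTube r w → (∀ x, v x ≤ w x) →
      ∀ x, H v x + p * v x ≤ H w x + p * w x)
    (u₁ u₂ u₁' u₂' : ℝ → BCF d)
    (hY1 : MemY T u₁ u₁') (hY2 : MemY T u₂ u₂')
    (hb1 : ∀ t ∈ Set.Ioc (0 : ℝ) T, ∀ x, 0 ≤ u₁ t x ∧ u₁ t x ≤ r)
    (hb2 : ∀ t ∈ Set.Ioc (0 : ℝ) T, ∀ x, 0 ≤ u₂ t x ∧ u₂ t x ≤ r)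
    (hF : ∀ t ∈ Set.Ioc (0 : ℝ) T, ∀ x,
      u₁' t x - H (truncate (u₁ t) r) x ≤ u₂' t x - H (truncate (u₂ t) r) x)
    (hinit : ∀ x, u₁ 0 x ≤ u₂ 0 x) :
    ∀ t ∈ Set.Icc (0 : ℝ) T, ∀ x, u₁ t x ≤ u₂ t x := by
  obtain ⟨hc1, hc1', hd1⟩ := hY1
  obtain ⟨hc2, hc2', hd2⟩ := hY2
  set W : ℝ → BCF d := fun t => u₁ t - u₂ t with hWdef
  set g : ℝ → ℝ := fun t => ‖(W t)⁺‖ with hgdef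
  have gnonneg : ∀ t, 0 ≤ g t := fun t => norm_nonneg _
  have hWpos_app : ∀ t x, ((W t)⁺ : BCF d) x = (W t x)⁺ := fun t x => rfl
  have hWpos_le : ∀ t x, ((W t)⁺ : BCF d) x ≤ g t := fun t x =>
    (le_abs_self _).trans (((W t)⁺).norm_coe_le_norm x)
  have hWle : ∀ t x, W t x ≤ g t := fun t x =>
    (le_posPart (W t x)).trans ((hWpos_app t x ▸ hWpos_le t x))
  -- the key pointwise differential inequality
  have key : ∀ t ∈ Set.Ioc (0 : ℝ) T, ∀ x,
      u₁' t x - u₂' t x ≤ -(p * W t x) + (p + h) * g t := by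
    intro t ht x
    have hA := hb1 t ht
    have hB := hb2 t ht
    set v : BCF d := u₁ t ⊔ u₂ t with hv
    have hvapp : ∀ x', v x' = u₁ t x' ⊔ u₂ t x' := fun x' => rfl
    have hvt : memTube r v := by
      intro x'
      rw [hvapp]
      exact ⟨le_trans (hA x').1 le_sup_left, sup_le (hA x').2 (hB x').2⟩
    have hF' := hF t ht x
    rw [truncate_eq_self hA, truncate_eq_self hB] at hF'
    have hm := hHmono (u₁ t) v hA hvt (fun x' => (hvapp x') ▸ le_sup_left) x
    have hl := hHlip (u₂ t) v hB hvt
    have hvB : v - u₂ t = (W t)⁺ := by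
      ext x'
      show v x' - u₂ t x' = (W t x')⁺
      rw [hvapp, posPart_def]
      show u₁ t x' ⊔ u₂ t x' - u₂ t x' = (u₁ t x' - u₂ t x') ⊔ 0
      show max (u₁ t x') (u₂ t x') - u₂ t x' = max (u₁ t x' - u₂ t x') 0
      rw [← max_sub_sub_right, sub_self]
    have hnvB : ‖v - u₂ t‖ = g t := by rw [hvB]
    have hHvB : H v x - H (u₂ t) x ≤ h * g t := by
      have h1 : H v x - H (u₂ t) x ≤ ‖H v - H (u₂ t)‖ :=
        (le_abs_self _).trans ((H v - H (u₂ t)).norm_coe_le_norm x)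
      calc H v x - H (u₂ t) x ≤ ‖H v - H (u₂ t)‖ := h1
        _ ≤ h * ‖v - u₂ t‖ := hl
        _ = h * g t := by rw [hnvB]
    have hvAx : v x - u₁ t x ≤ g t - W t x := by
      have e1 : ((W t)⁺ : BCF d) x = v x - u₂ t x := by rw [← hvB]; rfl
      have e2 : W t x = u₁ t x - u₂ t x := rfl
      have := hWpos_le t x
      rw [e1] at this
      linarith
    have hmul : p * (v x - u₁ t x) ≤ p * (g t - W t x) :=
      mul_le_mul_of_nonneg_left hvAx hp.le
    have e2 : W t x = u₁ t x - u₂ t x := rfl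
    nlinarith [hF', hm, hHvB, hmul]
  -- sup-norm bound after a small explicit Euler step
  have key2 : ∀ t ∈ Set.Ioc (0 : ℝ) T, ∀ s : ℝ, 0 ≤ s → s ≤ 1 / p →
      ‖(W t + s • (u₁' t - u₂' t))⁺‖ ≤ (1 + h * s) * g t := by
    intro t ht s hs0 hs1
    have hb : (0 : ℝ) ≤ (1 + h * s) * g t :=
      mul_nonneg (by nlinarith) (gnonneg t)
    rw [BoundedContinuousFunction.norm_le hb]
    intro x
    have hk := key t ht x
    have hW := hWle t x
    have h1ps : 0 ≤ 1 - p * s := by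
      have : p * s ≤ p * (1 / p) := mul_le_mul_of_nonneg_left hs1 hp.le
      rw [mul_one_div_cancel hp.ne'] at this
      linarith
    have happ : ((W t + s • (u₁' t - u₂' t))⁺ : BCF d) x
        = (W t x + s * (u₁' t x - u₂' t x))⁺ := rfl
    rw [happ, Real.norm_eq_abs, abs_of_nonneg (posPart_nonneg _), posPart_def]
    refine sup_le ?_ hb
    have h1 : s * (u₁' t x - u₂' t x) ≤ s * (-(p * W t x) + (p + h) * g t) :=
      mul_le_mul_of_nonneg_left hk hs0
    have h2 : (1 - p * s) * W t x ≤ (1 - p * s) * g t :=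
      mul_le_mul_of_nonneg_left hW h1ps
    nlinarith
  -- continuity of g
  have gcont : ContinuousOn g (Set.Icc 0 T) := by
    have hWc : ContinuousOn W (Set.Icc 0 T) := hc1.sub hc2
    exact (continuous_norm.comp continuous_posPart).comp_continuousOn hWc
  have g0 : g 0 = 0 := by
    have : (W 0)⁺ = (0 : BCF d) := by
      ext x
      rw [hWpos_app]
      have : W 0 x ≤ 0 := by
        have := hinit x
        show u₁ 0 x - u₂ 0 x ≤ 0
        linarith
      simp [posPart_eq_zero.mpr this]
    simp only [hgdef, this, norm_zero]
  -- Gronwall estimate starting from any a ∈ (0, T]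
  have main : ∀ a ∈ Set.Ioc (0 : ℝ) T, ∀ t ∈ Set.Icc a T,
      g t ≤ g a * Real.exp (h * (t - a)) := by
    intro a ha t htt
    have hcg : ContinuousOn g (Set.Icc a T) :=
      gcont.mono (Set.Icc_subset_Icc ha.1.le le_rfl)
    have hgron := le_gronwallBound_of_liminf_deriv_right_le
      (f := g) (f' := fun t => h * g t) (δ := g a) (K := h) (ε := 0)
      (a := a) (b := T) hcg ?_ le_rfl (fun x _ => by simp) t htt
    · rwa [gronwallBound_ε0] at hgron
    · intro τ hτ ρ hρ
      have hτI : τ ∈ Set.Ioc (0 : ℝ) T := ⟨lt_of_lt_of_le ha.1 hτ.1, hτ.2.le⟩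
      set D : BCF d := u₁' τ - u₂' τ with hD
      have hDer : HasDerivWithinAt W D (Set.Ioc 0 T) τ :=
        (hd1 τ hτI).sub (hd2 τ hτI)
      have hlo := hasDerivWithinAt_iff_isLittleO.mp hDer
      have hρ' : h * g τ < ρ := hρ
      have hcpos : 0 < (ρ - h * g τ) / 2 := by linarith
      have hev1 := hlo.def hcpos
      have hmem : Set.Ioc (0 : ℝ) T ∈ 𝓝[>] τ :=
        Ioc_mem_nhdsGT_of_mem ⟨hτI.1.le, hτ.2⟩
      have hev1' : ∀ᶠ z in 𝓝[>] τ,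
          ‖W z - W τ - (z - τ) • D‖ ≤ (ρ - h * g τ) / 2 * ‖z - τ‖ :=
        hev1.filter_mono (nhdsWithin_le_of_mem hmem)
      have hev2 : ∀ᶠ z in 𝓝[>] τ, z ∈ Set.Ioo τ (τ + 1 / p) :=
        Ioo_mem_nhdsGT_of_mem ⟨le_refl τ, by linarith [one_div_pos.mpr hp]⟩
      refine ((hev1'.and hev2).mono ?_).frequently
      rintro z ⟨hz1, hz2⟩
      have hs0 : 0 < z - τ := sub_pos.mpr hz2.1
      have hs1 : z - τ ≤ 1 / p := by
        have := hz2.2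
        linarith
      have hkey2 := key2 τ hτI (z - τ) hs0.le hs1
      have hlip : ‖(W z)⁺ - (W τ + (z - τ) • D)⁺‖ ≤ ‖W z - (W τ + (z - τ) • D)‖ := by
        have := lipschitzWith_posPart.dist_le_mul (W z) (W τ + (z - τ) • D)
        simpa [dist_eq_norm] using this
      have hsub : W z - (W τ + (z - τ) • D) = W z - W τ - (z - τ) • D := by abel
      have hnorm : ‖z - τ‖ = z - τ := by rw [Real.norm_eq_abs, abs_of_pos hs0]
      have hg_le : g z ≤ (1 + h * (z - τ)) * g τ + (ρ - h * g τ) / 2 * (z - τ) := by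
        calc g z = ‖(W τ + (z - τ) • D)⁺ + ((W z)⁺ - (W τ + (z - τ) • D)⁺)‖ := by
              rw [add_sub_cancel]
          _ ≤ ‖(W τ + (z - τ) • D)⁺‖ + ‖(W z)⁺ - (W τ + (z - τ) • D)⁺‖ :=
              norm_add_le _ _
          _ ≤ (1 + h * (z - τ)) * g τ + ‖W z - (W τ + (z - τ) • D)‖ :=
              add_le_add hkey2 hlip
          _ ≤ (1 + h * (z - τ)) * g τ + (ρ - h * g τ) / 2 * (z - τ) := by
              rw [hsub]
              exact add_le_add le_rfl (le_of_le_of_eq hz1 (by rw [hnorm]))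
      have hdiff : g z - g τ ≤ (z - τ) * (h * g τ + (ρ - h * g τ) / 2) := by nlinarith
      have : (z - τ)⁻¹ * (g z - g τ) ≤ h * g τ + (ρ - h * g τ) / 2 := by
        rw [inv_mul_le_iff₀ hs0]
        exact hdiff
      linarith
  -- g vanishes on (0, T]
  have gzero : ∀ t ∈ Set.Ioc (0 : ℝ) T, g t = 0 := by
    intro t ht
    have hle : g t ≤ 0 := by
      have hev : ∀ᶠ a in 𝓝[>] (0 : ℝ), g t ≤ g a * Real.exp (h * (t - a)) := by
        filter_upwards [Ioc_mem_nhdsGT_of_mem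
          (⟨le_refl (0 : ℝ), ht.1⟩ : (0 : ℝ) ∈ Set.Ico 0 t)] with a ha
        exact main a ⟨ha.1, ha.2.trans ht.2⟩ t ⟨ha.2, ht.2⟩
      have htend : Filter.Tendsto (fun a => g a * Real.exp (h * (t - a)))
          (𝓝[>] (0 : ℝ)) (𝓝 (g 0 * Real.exp (h * (t - 0)))) := by
        apply Filter.Tendsto.mul
        · have h1 : Filter.Tendsto g (𝓝[Set.Icc 0 T] (0 : ℝ)) (𝓝 (g 0)) :=
            gcont.continuousWithinAt ⟨le_refl 0, hT.le⟩
          exact h1.mono_left (nhdsWithin_le_of_mem (Filter.mem_of_superset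
            (Ioc_mem_nhdsGT_of_mem ⟨le_refl (0 : ℝ), hT⟩) Set.Ioc_subset_Icc_self))
        · have : Continuous fun a : ℝ => Real.exp (h * (t - a)) := by continuity
          exact (this.tendsto 0).mono_left nhdsWithin_le_nhds
      rw [g0, zero_mul] at htend
      exact ge_of_tendsto htend hev
    linarith [gnonneg t]
  -- conclusion
  intro t ht x
  rcases eq_or_lt_of_le ht.1 with h0 | h0
  · rw [← h0]; exact hinit x
  · have hzt := gzero t ⟨h0, ht.2⟩
    have h1 : ((W t)⁺ : BCF d) x ≤ 0 := hzt ▸ hWpos_le t x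
    have h2 : W t x ≤ 0 := (le_posPart (W t x)).trans (by rw [← hWpos_app t x]; exact h1)
    have : u₁ t x - u₂ t x ≤ 0 := h2
    linarith

end
end

section
/- Let T > 0 be fixed and let u₁, u₂ ∈ Y_T be such that for all t ∈ (0,T] and x ∈ ℝ^d: ∂_t u₁ − κ a∗u₁ + m u₁ + u₁·Gu₁ ≤ ∂_t u₂ − κ a∗u₂ + m u₂ + u₂·Gu₂, 0 ≤ u₁(x,t) ≤ θ, 0 ≤ u₂(x,t) ≤ θ, and 0 ≤ u₁(x,0) ≤ u₂(x,0) ≤ θ. Then, under assumptions (A1)–(A4), 0 ≤ u₁(x,t) ≤ u₂(x,t) ≤ θ for all t ∈ [0,T] and x ∈ ℝ^d. -/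
open MeasureTheory Filter Topology
open scoped RealInnerProductSpace

noncomputable section

variable {d : ℕ}

section auxStatement5

variable {d : ℕ}

/-- Positive part of a bounded continuous function. -/
def posPartBCF (v : BCF d) : BCF d :=
  BoundedContinuousFunction.ofNormedAddCommGroup
    (fun x => max (v x) 0) (v.continuous.max continuous_const) ‖v‖
    (fun x => by
      rw [Real.norm_eq_abs, abs_of_nonneg (le_max_right _ 0)]
      exact max_le ((le_abs_self _).trans (v.norm_coe_le_norm x)) (norm_nonneg v))

@[simp] lemma posPartBCF_apply (v : BCF d) (x : EucSp d) :
    posPartBCF v x = max (v x) 0 := rfl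

/-- Pointwise minimum of two bounded continuous functions. -/
def minBCF (v u : BCF d) : BCF d :=
  BoundedContinuousFunction.ofNormedAddCommGroup
    (fun x => min (v x) (u x)) (v.continuous.min u.continuous) (‖v‖ + ‖u‖)
    (fun x => by
      have h1 : |v x| ≤ ‖v‖ := by
        rw [← Real.norm_eq_abs]; exact v.norm_coe_le_norm x
      have h2 : |u x| ≤ ‖u‖ := by
        rw [← Real.norm_eq_abs]; exact u.norm_coe_le_norm x
      rw [Real.norm_eq_abs]
      refine abs_le.mpr ⟨le_min ?_ ?_, ?_⟩
      · nlinarith [abs_le.mp h1, abs_le.mp h2]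
      · nlinarith [abs_le.mp h1, abs_le.mp h2]
      · exact (min_le_left _ _).trans (by nlinarith [abs_le.mp h1, abs_le.mp h2]))

@[simp] lemma minBCF_apply (v u : BCF d) (x : EucSp d) :
    minBCF v u x = min (v x) (u x) := rfl

lemma norm_posPartBCF_sub_le (v u : BCF d) :
    ‖posPartBCF v - posPartBCF u‖ ≤ ‖v - u‖ := by
  refine (BoundedContinuousFunction.norm_le (norm_nonneg _)).2 fun x => ?_
  have h1 : |v x - u x| ≤ ‖v - u‖ := by
    rw [← Real.norm_eq_abs]
    simpa using (v - u).norm_coe_le_norm x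
  calc ‖(posPartBCF v - posPartBCF u) x‖ = |max (v x) 0 - max (u x) 0| := by
        simp [Real.norm_eq_abs]
    _ ≤ |v x - u x| := abs_max_sub_max_le_abs _ _ _
    _ ≤ ‖v - u‖ := h1

lemma convol_integrable (a : EucSp d → ℝ) (haI : Integrable a) (v : BCF d)
    (x : EucSp d) : Integrable (fun y => a (x - y) * v y) := by
  have h1 : Integrable (fun y => a (x - y)) := (integrable_comp_sub_left a x).2 haI
  have h2 := h1.bdd_mul v.continuous.aestronglyMeasurable
    (c := ‖v‖) (Filter.Eventually.of_forall fun y => v.norm_coe_le_norm y)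
  simpa [mul_comm] using h2

lemma convol_sub_le (a : EucSp d → ℝ) (ha0 : ∀ x, 0 ≤ a x) (haI : Integrable a)
    (haN : (∫ x, a x) = 1) (v u : BCF d) (x : EucSp d) :
    convol a (⇑v) x - convol a (⇑u) x ≤ ‖v - u‖ := by
  have hi1 := convol_integrable a haI v x
  have hi2 := convol_integrable a haI u x
  have hsh : Integrable (fun y => a (x - y)) := (integrable_comp_sub_left a x).2 haI
  have heq : convol a (⇑v) x - convol a (⇑u) x = ∫ y, a (x - y) * (v y - u y) := by
    rw [convol, convol, ← integral_sub hi1 hi2]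
    congr 1; ext y; ring
  have hi3 : Integrable (fun y => a (x - y) * (v y - u y)) := by
    have := hi1.sub hi2
    simpa [mul_sub, Pi.sub_def] using this
  rw [heq]
  calc (∫ y, a (x - y) * (v y - u y)) ≤ ∫ y, a (x - y) * ‖v - u‖ := by
        refine integral_mono hi3 (hsh.mul_const _) fun y => ?_
        refine mul_le_mul_of_nonneg_left ?_ (ha0 _)
        have : |v y - u y| ≤ ‖v - u‖ := by
          rw [← Real.norm_eq_abs]; simpa using (v - u).norm_coe_le_norm y
        exact (le_abs_self _).trans this
    _ = ‖v - u‖ := by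
        rw [integral_mul_const, integral_sub_left_eq_self a volume x, haN, one_mul]

end auxStatement5

set_option maxHeartbeats 1600000 in
/-- Comparison principle for the basic equation (Theorem `compar_pr_basic`, part 1). -/
theorem statement5 (d : ℕ) (hd : 1 ≤ d) (κ m : ℝ) (hκ : 0 < κ)
    (a : EucSp d → ℝ) (ha0 : ∀ x, 0 ≤ a x) (haI : Integrable a)
    (haN : (∫ x, a x) = 1)
    (G : BCF d → BCF d) (θ : ℝ)
    (hA1 : assumA1 κ m) (hA2 : assumA2 G κ m θ) (hA3 : assumA3 G θ)
    (hA4 : assumA4 a κ G θ)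
    (T : ℝ) (hT : 0 < T)
    (u₁ u₂ u₁' u₂' : ℝ → BCF d) (hY1 : MemY T u₁ u₁') (hY2 : MemY T u₂ u₂')
    (hb1 : ∀ t ∈ Set.Ioc (0 : ℝ) T, ∀ x, 0 ≤ u₁ t x ∧ u₁ t x ≤ θ)
    (hb2 : ∀ t ∈ Set.Ioc (0 : ℝ) T, ∀ x, 0 ≤ u₂ t x ∧ u₂ t x ≤ θ)
    (hineq : ∀ t ∈ Set.Ioc (0 : ℝ) T, ∀ x,
      u₁' t x - κ * convol a (⇑(u₁ t)) x + m * u₁ t x + u₁ t x * G (u₁ t) x ≤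
        u₂' t x - κ * convol a (⇑(u₂ t)) x + m * u₂ t x + u₂ t x * G (u₂ t) x)
    (hinit : ∀ x, 0 ≤ u₁ 0 x ∧ u₁ 0 x ≤ u₂ 0 x ∧ u₂ 0 x ≤ θ) :
    ∀ t ∈ Set.Icc (0 : ℝ) T, ∀ x,
      0 ≤ u₁ t x ∧ u₁ t x ≤ u₂ t x ∧ u₂ t x ≤ θ := by
  obtain ⟨hm, hmκ⟩ := hA1
  obtain ⟨hθ, hG0, hGθ, hGtube⟩ := hA2
  obtain ⟨l, hl, hLip⟩ := hA3
  obtain ⟨p, hp, hmono⟩ := hA4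
  -- tube bounds on all of [0,T]
  have htube1 : ∀ t ∈ Set.Icc (0 : ℝ) T, memTube θ (u₁ t) := by
    intro t ht x
    rcases eq_or_lt_of_le ht.1 with h0 | h0
    · obtain ⟨h1, h2, h3⟩ := hinit x
      exact h0 ▸ ⟨h1, le_trans h2 h3⟩
    · exact hb1 t ⟨h0, ht.2⟩ x
  have htube2 : ∀ t ∈ Set.Icc (0 : ℝ) T, memTube θ (u₂ t) := by
    intro t ht x
    rcases eq_or_lt_of_le ht.1 with h0 | h0
    · obtain ⟨h1, h2, h3⟩ := hinit x
      exact h0 ▸ ⟨le_trans h1 h2, h3⟩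
    · exact hb2 t ⟨h0, ht.2⟩ x
  -- the difference and its positive-part norm
  set w : ℝ → BCF d := fun t => u₁ t - u₂ t with hw_def
  set g : ℝ → ℝ := fun t => ‖posPartBCF (w t)‖ with hg_def
  have hgnn : ∀ t, 0 ≤ g t := fun t => norm_nonneg _
  have hwle : ∀ t x, u₁ t x - u₂ t x ≤ g t := by
    intro t x
    have h1 : ‖posPartBCF (w t) x‖ ≤ g t := (posPartBCF (w t)).norm_coe_le_norm x
    have h2 : posPartBCF (w t) x = max (w t x) 0 := rfl
    have h3 : w t x = u₁ t x - u₂ t x := by simp [hw_def]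
    rw [Real.norm_eq_abs, h2, abs_of_nonneg (le_max_right _ 0), h3] at h1
    exact (le_max_left _ 0).trans h1
  have hwcont : ContinuousOn w (Set.Icc 0 T) := hY1.1.sub hY2.1
  have hgcont : ContinuousOn g (Set.Icc 0 T) := by
    have hlip : LipschitzWith 1 (fun v : BCF d => ‖posPartBCF v‖) := by
      refine LipschitzWith.of_dist_le_mul fun v u => ?_
      rw [NNReal.coe_one, one_mul, Real.dist_eq, dist_eq_norm]
      exact (abs_norm_sub_norm_le _ _).trans (norm_posPartBCF_sub_le v u)
    exact hlip.continuous.comp_continuousOn hwcont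
  set K : ℝ := κ + θ * l + p with hK_def
  have hK0 : 0 < K := by positivity
  -- key pointwise bound on the derivative
  have keybound : ∀ t ∈ Set.Ioc (0 : ℝ) T, ∀ x,
      u₁' t x - u₂' t x ≤ K * g t - (m + p) * (u₁ t x - u₂ t x) := by
    intro t ht x
    have ht' : t ∈ Set.Icc (0 : ℝ) T := ⟨ht.1.le, ht.2⟩
    set z : BCF d := minBCF (u₁ t) (u₂ t) with hz_def
    have hz_tube : memTube θ z := by
      intro y
      constructor
      · exact le_min (htube1 t ht' y).1 (htube2 t ht' y).1
      · exact (min_le_left _ _).trans (htube1 t ht' y).2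
    have hzle : ∀ y, z y ≤ u₂ t y := fun y => min_le_right _ _
    have hA4z := hmono z (u₂ t) hz_tube (htube2 t ht') hzle x
    have hnorm_u1z : ‖u₁ t - z‖ ≤ g t := by
      refine (BoundedContinuousFunction.norm_le (hgnn t)).2 fun y => ?_
      have h1 : (u₁ t - z) y = u₁ t y - min (u₁ t y) (u₂ t y) := by simp [hz_def]
      have h2 : u₁ t y - min (u₁ t y) (u₂ t y) = max (u₁ t y - u₂ t y) 0 := by
        rcases le_total (u₁ t y) (u₂ t y) with h | h
        · rw [min_eq_left h, max_eq_right (by linarith)]; ring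
        · rw [min_eq_right h, max_eq_left (by linarith)]
      have h3 : ‖posPartBCF (w t) y‖ ≤ g t := (posPartBCF (w t)).norm_coe_le_norm y
      have h4 : posPartBCF (w t) y = max (u₁ t y - u₂ t y) 0 := by simp [hw_def]
      rw [Real.norm_eq_abs, h1, h2, abs_of_nonneg (le_max_right _ 0)]
      rw [Real.norm_eq_abs, h4, abs_of_nonneg (le_max_right _ 0)] at h3
      exact h3
    have hc := convol_sub_le a ha0 haI haN (u₁ t) z x
    have hGu1 := hGtube (u₁ t) (htube1 t ht')
    have hGdiff : ‖G (u₁ t) - G z‖ ≤ l * ‖u₁ t - z‖ :=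
      hLip _ _ (htube1 t ht') hz_tube
    have hGdx : G z x - G (u₁ t) x ≤ l * ‖u₁ t - z‖ := by
      have h5 : ‖(G (u₁ t) - G z) x‖ ≤ ‖G (u₁ t) - G z‖ :=
        (G (u₁ t) - G z).norm_coe_le_norm x
      have h6 : (G (u₁ t) - G z) x = G (u₁ t) x - G z x := by simp
      rw [Real.norm_eq_abs, h6] at h5
      have := abs_le.mp h5
      linarith
    have hln : 0 ≤ l * ‖u₁ t - z‖ := mul_nonneg hl.le (norm_nonneg _)
    have key1 : z x * G z x - u₁ t x * G (u₁ t) x ≤ θ * (l * ‖u₁ t - z‖) := by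
      have h7 : z x * G z x - z x * G (u₁ t) x ≤ θ * (l * ‖u₁ t - z‖) := by
        calc z x * G z x - z x * G (u₁ t) x = z x * (G z x - G (u₁ t) x) := by ring
          _ ≤ z x * (l * ‖u₁ t - z‖) :=
              mul_le_mul_of_nonneg_left hGdx (hz_tube x).1
          _ ≤ θ * (l * ‖u₁ t - z‖) :=
              mul_le_mul_of_nonneg_right (hz_tube x).2 hln
      have h8 : z x * G (u₁ t) x ≤ u₁ t x * G (u₁ t) x :=
        mul_le_mul_of_nonneg_right (min_le_left _ _) (hGu1 x).1
      linarith
    have hu1z : u₁ t x - z x ≤ ‖u₁ t - z‖ := by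
      have h9 : ‖(u₁ t - z) x‖ ≤ ‖u₁ t - z‖ := (u₁ t - z).norm_coe_le_norm x
      have h10 : (u₁ t - z) x = u₁ t x - z x := by simp
      rw [Real.norm_eq_abs, h10] at h9
      exact (le_abs_self _).trans h9
    have hpz : p * u₁ t x - p * z x ≤ p * ‖u₁ t - z‖ := by
      have := mul_le_mul_of_nonneg_left hu1z hp
      linarith [mul_sub p (u₁ t x) (z x)]
    have hκc : κ * convol a (⇑(u₁ t)) x - κ * convol a (⇑z) x ≤ κ * ‖u₁ t - z‖ := by
      have := mul_le_mul_of_nonneg_left hc hκ.le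
      linarith [mul_sub κ (convol a (⇑(u₁ t)) x) (convol a (⇑z) x)]
    have hκg : κ * ‖u₁ t - z‖ ≤ κ * g t := mul_le_mul_of_nonneg_left hnorm_u1z hκ.le
    have hθg : θ * (l * ‖u₁ t - z‖) ≤ θ * (l * g t) := by
      refine mul_le_mul_of_nonneg_left ?_ hθ.le
      exact mul_le_mul_of_nonneg_left hnorm_u1z hl.le
    have hpg : p * ‖u₁ t - z‖ ≤ p * g t := mul_le_mul_of_nonneg_left hnorm_u1z hp
    have hi := hineq t ht x
    have hKg : K * g t = κ * g t + θ * (l * g t) + p * g t := by rw [hK_def]; ring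
    linarith
  -- Grönwall on [t₀, T] for every t₀ ∈ (0, T]
  have gron : ∀ t₀ ∈ Set.Ioc (0 : ℝ) T, ∀ t ∈ Set.Icc t₀ T,
      g t ≤ g t₀ * Real.exp (K * (t - t₀)) := by
    intro t₀ ht₀
    have hmain := le_gronwallBound_of_liminf_deriv_right_le
      (f := g) (f' := fun t => K * g t) (δ := g t₀) (K := K) (ε := 0)
      (a := t₀) (b := T)
      (hgcont.mono (Set.Icc_subset_Icc ht₀.1.le le_rfl))
      ?_ le_rfl (fun t _ => by simp)
    · intro t ht
      have := hmain t ht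
      rwa [gronwallBound_ε0] at this
    · -- liminf condition
      intro t ht r hr
      have ht0 : 0 < t := lt_of_lt_of_le ht₀.1 ht.1
      have htT : t < T := ht.2
      have htIoc : t ∈ Set.Ioc (0 : ℝ) T := ⟨ht0, htT.le⟩
      have hderiv : HasDerivWithinAt w (u₁' t - u₂' t) (Set.Ioc 0 T) t :=
        ((hY1.2.2 t htIoc)).sub ((hY2.2.2 t htIoc))
      have htend0 : Tendsto
          (fun z => ‖z - t‖⁻¹ * ‖w z - w t - (z - t) • (u₁' t - u₂' t)‖)
          (𝓝[Set.Ioc 0 T] t) (𝓝 0) := hasDerivWithinAt_iff_tendsto.1 hderiv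
      have hfle : 𝓝[>] t ≤ 𝓝[Set.Ioc (0 : ℝ) T] t := by
        rw [← nhdsWithin_Ioc_eq_nhdsGT htT]
        exact nhdsWithin_mono t (Set.Ioc_subset_Ioc ht0.le le_rfl)
      have htend : Tendsto
          (fun z => ‖z - t‖⁻¹ * ‖w z - w t - (z - t) • (u₁' t - u₂' t)‖)
          (𝓝[>] t) (𝓝 0) := htend0.mono_left hfle
      set ε' : ℝ := r - K * g t with hε'_def
      have hε' : 0 < ε' := sub_pos.2 hr
      have hev1 : ∀ᶠ z in 𝓝[>] t,
          ‖z - t‖⁻¹ * ‖w z - w t - (z - t) • (u₁' t - u₂' t)‖ < ε' :=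
        htend.eventually (Filter.Tendsto.eventually_lt_const hε' tendsto_id) |>.mono
          (fun z hz => hz)
      have hev2 : ∀ᶠ z in 𝓝[>] t, z ∈ Set.Ioo t (t + (m + p + 1)⁻¹) := by
        have hpos : (0:ℝ) < (m + p + 1)⁻¹ := by positivity
        exact Filter.eventually_of_mem
          (Ioo_mem_nhdsGT (by linarith : t < t + (m + p + 1)⁻¹))
          fun z hz => hz
      refine ((hev1.and hev2).mono fun z hz => ?_).frequently
      obtain ⟨hz1, hz2⟩ := hz
      have hzt : t < z := hz2.1
      have hzt' : 0 < z - t := sub_pos.2 hzt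
      have hsmall : (z - t) * (m + p) ≤ 1 := by
        have h1 : z - t ≤ (m + p + 1)⁻¹ := by linarith [hz2.2]
        have h2 : (m + p + 1)⁻¹ * (m + p) ≤ 1 := by
          rw [inv_mul_le_iff₀ (by positivity)]
          nlinarith
        nlinarith [mul_le_mul_of_nonneg_right h1 (by positivity : (0:ℝ) ≤ m + p)]
      set R : BCF d := w z - w t - (z - t) • (u₁' t - u₂' t) with hR_def
      have hRnorm : ‖R‖ < (z - t) * ε' := by
        rw [Real.norm_eq_abs, abs_of_pos hzt', inv_mul_lt_iff₀ hzt'] at hz1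
        exact hz1
      -- pointwise estimate on w z
      have hgz : g z ≤ g t + (z - t) * (K * g t) + ‖R‖ := by
        have hRHS : 0 ≤ g t + (z - t) * (K * g t) + ‖R‖ := by
          have : 0 ≤ (z - t) * (K * g t) := by positivity
          linarith [hgnn t, norm_nonneg R]
        refine (BoundedContinuousFunction.norm_le hRHS).2 fun x => ?_
        have hwz : w z x = w t x + (z - t) * (u₁' t x - u₂' t x) + R x := by
          simp only [hR_def]
          simp [smul_eq_mul]
        have hkb := keybound t htIoc x
        have hwtx : w t x = u₁ t x - u₂ t x := by simp [hw_def]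
        have hRx : R x ≤ ‖R‖ := by
          have := R.norm_coe_le_norm x
          rw [Real.norm_eq_abs] at this
          exact (le_abs_self _).trans this
        have hwtg : w t x ≤ g t := by rw [hwtx]; exact hwle t x
        have hwzle : w z x ≤ g t + (z - t) * (K * g t) + ‖R‖ := by
          rw [hwz, hwtx]
          have h1 : (z - t) * (u₁' t x - u₂' t x) ≤
              (z - t) * (K * g t - (m + p) * (u₁ t x - u₂ t x)) :=
            mul_le_mul_of_nonneg_left hkb hzt'.le
          have h2 : (1 - (z - t) * (m + p)) * (u₁ t x - u₂ t x) ≤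
              (1 - (z - t) * (m + p)) * g t := by
            refine mul_le_mul_of_nonneg_left ?_ (by linarith)
            rw [← hwtx]; exact hwtg
          have h3 : (1 - (z - t) * (m + p)) * g t ≤ g t := by
            nlinarith [hgnn t, mul_nonneg hzt'.le (by positivity : (0:ℝ) ≤ m + p)]
          nlinarith
        have hpx : posPartBCF (w z) x = max (w z x) 0 := rfl
        rw [Real.norm_eq_abs, hpx, abs_of_nonneg (le_max_right _ 0)]
        exact max_le hwzle hRHS
      rw [inv_mul_lt_iff₀ hzt']
      have : g z - g t ≤ (z - t) * (K * g t) + ‖R‖ := by linarith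
      calc g z - g t ≤ (z - t) * (K * g t) + ‖R‖ := this
        _ < (z - t) * (K * g t) + (z - t) * ε' := by linarith
        _ = (z - t) * r := by rw [hε'_def]; ring
  -- main comparison
  have main : ∀ t ∈ Set.Icc (0 : ℝ) T, ∀ x, u₁ t x ≤ u₂ t x := by
    intro t ht x
    rcases eq_or_lt_of_le ht.1 with h0 | h0
    · rw [← h0]; exact (hinit x).2.1
    · -- 0 < t
      have hg0 : g 0 = 0 := by
        have hle : ‖posPartBCF (w 0)‖ ≤ 0 := by
          refine (BoundedContinuousFunction.norm_le le_rfl).2 fun y => ?_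
          have h1 : posPartBCF (w 0) y = max (w 0 y) 0 := rfl
          have h2 : w 0 y = u₁ 0 y - u₂ 0 y := by simp [hw_def]
          have h3 : u₁ 0 y - u₂ 0 y ≤ 0 := sub_nonpos.2 (hinit y).2.1
          rw [Real.norm_eq_abs, h1, abs_of_nonneg (le_max_right _ 0),
            max_eq_right (h2 ▸ h3)]
        exact le_antisymm hle (norm_nonneg _)
      have key : ∀ s ∈ Set.Ioc (0 : ℝ) t, u₁ t x - u₂ t x ≤ g s * Real.exp (K * T) := by
        intro s hs
        have hsT : s ∈ Set.Ioc (0 : ℝ) T := ⟨hs.1, hs.2.trans ht.2⟩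
        have h1 := gron s hsT t ⟨hs.2, ht.2⟩
        have h2 : Real.exp (K * (t - s)) ≤ Real.exp (K * T) := by
          apply Real.exp_le_exp.2
          have : t - s ≤ T := by
            have := ht.2; have := hs.1; linarith
          nlinarith
        calc u₁ t x - u₂ t x ≤ g t := hwle t x
          _ ≤ g s * Real.exp (K * (t - s)) := h1
          _ ≤ g s * Real.exp (K * T) :=
              mul_le_mul_of_nonneg_left h2 (hgnn s)
      haveI hne : (𝓝[Set.Ioc (0 : ℝ) t] 0).NeBot := by
        rw [← mem_closure_iff_nhdsWithin_neBot, closure_Ioc h0.ne]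
        exact ⟨le_rfl, h0.le⟩
      have htends : Tendsto (fun s => g s * Real.exp (K * T))
          (𝓝[Set.Ioc (0 : ℝ) t] 0) (𝓝 (g 0 * Real.exp (K * T))) := by
        have hc0 : ContinuousWithinAt g (Set.Icc 0 T) 0 := hgcont 0 ⟨le_rfl, hT.le⟩
        have : Tendsto g (𝓝[Set.Ioc (0 : ℝ) t] 0) (𝓝 (g 0)) :=
          hc0.mono_left (nhdsWithin_mono 0
            (Set.Ioc_subset_Icc_self.trans (Set.Icc_subset_Icc le_rfl ht.2)))
        exact this.mul_const _
      have hfinal : u₁ t x - u₂ t x ≤ g 0 * Real.exp (K * T) := by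
        refine ge_of_tendsto htends ?_
        filter_upwards [eventually_mem_nhdsWithin] with s hs using key s hs
      rw [hg0, zero_mul] at hfinal
      linarith
  intro t ht x
  exact ⟨(htube1 t ht x).1, main t ht x, (htube2 t ht x).2⟩

end
end

section
/- Let b ∈ L¹(ℝ → ℝ₊) with ∫_ℝ b(s) ds = 1 and ∫_ℝ |s| b(s) ds < ∞, and let v ∈ L^∞(ℝ → ℝ₊) be a non-increasing function. Then lim_{r→∞} ∫_{−r}^{r} ((b∗v)(s) − v(s)) ds = (v(−∞) − v(+∞)) · ∫_ℝ s b(s) ds, where v(±∞) denote the limits of v at ±∞ (which exist by monotonicity and boundedness) and (b∗v)(s) = ∫_ℝ b(s − y) v(y) dy. -/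
open Filter Topology MeasureTheory Set

noncomputable section

/-- Lemma `average_of_jump_gen_is_zero`: the integral of `b∗v − v` over `[−r, r]`
converges, as `r → ∞`, to `(v(−∞) − v(+∞)) ∫ s b(s) ds`. -/
theorem statement12 (b : ℝ → ℝ) (hb0 : ∀ s, 0 ≤ b s) (hbI : Integrable b)
    (hb1 : (∫ s, b s) = 1) (hbm : Integrable fun s => |s| * b s)
    (v : ℝ → ℝ) (hv0 : ∀ s, 0 ≤ v s) (hvb : ∃ C, ∀ s, v s ≤ C)
    (hmono : Antitone v)
    (vneg vpos : ℝ)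
    (hneg : Tendsto v atBot (nhds vneg)) (hpos : Tendsto v atTop (nhds vpos)) :
    Tendsto (fun r : ℝ => ∫ s in (-r)..r, ((∫ y, b (s - y) * v y) - v s))
      atTop (nhds ((vneg - vpos) * ∫ s, s * b s)) := by
  obtain ⟨C, hC⟩ := hvb
  have hC0 : 0 ≤ C := le_trans (hv0 0) (hC 0)
  have hvm : Measurable v := hmono.measurable
  have hvabs : ∀ s, |v s| ≤ C := fun s => abs_le.2 ⟨by linarith [hv0 s], hC s⟩
  have hvint : ∀ a c : ℝ, IntervalIntegrable v volume a c := fun a c =>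
    hmono.intervalIntegrable
  -- the primitive of v
  set F : ℝ → ℝ := fun x => ∫ t in (0:ℝ)..x, v t with hFdef
  have hFrep : ∀ a c : ℝ, ∫ s in a..c, v s = F c - F a := by
    intro a c
    have := intervalIntegral.integral_add_adjacent_intervals (hvint 0 a) (hvint a c)
    simp only [hFdef]
    linarith
  have hFcont : Continuous F :=
    intervalIntegral.continuous_primitive hvint 0
  -- sliding limit lemma
  have hslide : ∀ (u L : ℝ) (w : ℝ → ℝ), Measurable w → (∀ s, |w s| ≤ C) →
      Tendsto w atTop (nhds L) →
      Tendsto (fun r : ℝ => ∫ s in (r - u)..r, w s) atTop (nhds (u * L)) := by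
    intro u L w hwm hwb hwl
    have key : ∀ r : ℝ, ∫ s in (r - u)..r, w s = ∫ t in (-u)..(0:ℝ), w (t + r) := by
      intro r
      rw [intervalIntegral.integral_comp_add_right, show -u + r = r - u by ring, zero_add]
    have hconst : ∫ t in (-u)..(0:ℝ), L = u * L := by
      simp [intervalIntegral.integral_const, smul_eq_mul]
    simp only [key]
    rw [show u * L = ∫ t in (-u)..(0:ℝ), L from hconst.symm]
    apply intervalIntegral.tendsto_integral_filter_of_dominated_convergence
      (bound := fun _ => C)
    · filter_upwards with r
      exact ((hwm.comp (measurable_id.add_const r)).aestronglyMeasurable).restrict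
    · filter_upwards with r
      filter_upwards with t _ using hwb _
    · exact intervalIntegrable_const
    · filter_upwards with t _
      exact hwl.comp (tendsto_atTop_add_const_left atTop t tendsto_id)
  -- the two boundary limits
  have hA : ∀ u : ℝ, Tendsto (fun r : ℝ => ∫ s in (r - u)..r, v s) atTop
      (nhds (u * vpos)) := fun u => hslide u vpos v hvm hvabs hpos
  have hB : ∀ u : ℝ, Tendsto (fun r : ℝ => ∫ s in (-r - u)..(-r), v s) atTop
      (nhds (u * vneg)) := by
    intro u
    have h1 := hslide (-u) vneg (fun x => v (-x)) (hvm.comp measurable_neg)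
      (fun s => hvabs _) (hneg.comp tendsto_neg_atTop_atBot)
    have key : (fun r : ℝ => ∫ s in (r - -u)..r, v (-s)) =
        fun r : ℝ => - ∫ s in (-r - u)..(-r), v s := by
      funext r
      rw [intervalIntegral.integral_comp_neg v]
      have e1 : -(r - -u) = -r - u := by ring
      rw [e1, intervalIntegral.integral_symm]
    rw [key] at h1
    have h2 := h1.neg
    simpa using h2
  -- the reduced integrand
  set G : ℝ → ℝ → ℝ := fun r u =>
    b u * ((F (-r) - F (-r - u)) - (F r - F (r - u))) with hGdef
  -- pointwise limit of G
  have hGlim : ∀ u : ℝ, Tendsto (fun r : ℝ => G r u) atTop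
      (nhds (b u * (u * vneg - u * vpos))) := by
    intro u
    have e1 : (fun r : ℝ => G r u) = fun r : ℝ =>
        b u * ((∫ s in (-r - u)..(-r), v s) - ∫ s in (r - u)..r, v s) := by
      funext r
      rw [hFrep, hFrep]
    rw [e1]
    exact ((hB u).sub (hA u)).const_mul (b u)
  -- dominated convergence for the outer integral
  have hmain : Tendsto (fun r : ℝ => ∫ u, G r u) atTop
      (nhds ((vneg - vpos) * ∫ s, s * b s)) := by
    have hval : ((vneg - vpos) * ∫ s, s * b s) = ∫ u, b u * (u * vneg - u * vpos) := by
      rw [show (fun u => b u * (u * vneg - u * vpos)) =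
          fun u => (vneg - vpos) * (u * b u) from funext fun u => by ring,
        integral_const_mul]
    rw [hval]
    apply tendsto_integral_filter_of_dominated_convergence
      (bound := fun u => 2 * C * (|u| * b u))
    · filter_upwards with r
      have hc : Continuous fun u : ℝ => (F (-r) - F (-r - u)) - (F r - F (r - u)) :=
        ((continuous_const.sub (hFcont.comp (continuous_const.sub continuous_id))).sub
          (continuous_const.sub (hFcont.comp (continuous_const.sub continuous_id))))
      exact hbI.1.mul hc.aestronglyMeasurable
    · filter_upwards [eventually_ge_atTop (0:ℝ)] with r hr
      filter_upwards with u
      have e1 : F (-r) - F (-r - u) = ∫ s in (-r - u)..(-r), v s := (hFrep _ _).symm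
      have e2 : F r - F (r - u) = ∫ s in (r - u)..r, v s := (hFrep _ _).symm
      have b1 : |∫ s in (-r - u)..(-r), v s| ≤ C * |u| := by
        have := intervalIntegral.norm_integral_le_of_norm_le_const
          (a := -r - u) (b := -r) (C := C) (f := v) (fun x _ => hvabs x)
        simpa using this.trans_eq (by rw [show (-r) - (-r - u) = u by ring])
      have b2 : |∫ s in (r - u)..r, v s| ≤ C * |u| := by
        have := intervalIntegral.norm_integral_le_of_norm_le_const
          (a := r - u) (b := r) (C := C) (f := v) (fun x _ => hvabs x)
        simpa using this.trans_eq (by rw [show r - (r - u) = u by ring])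
      have : |G r u| ≤ b u * (2 * C * |u|) := by
        rw [hGdef]
        simp only []
        rw [abs_mul, abs_of_nonneg (hb0 u)]
        refine mul_le_mul_of_nonneg_left ?_ (hb0 u)
        rw [e1, e2]
        calc |(∫ s in (-r - u)..(-r), v s) - ∫ s in (r - u)..r, v s|
            ≤ |∫ s in (-r - u)..(-r), v s| + |∫ s in (r - u)..r, v s| := abs_sub _ _
          _ ≤ C * |u| + C * |u| := add_le_add b1 b2
          _ = 2 * C * |u| := by ring
      calc ‖G r u‖ = |G r u| := rfl
        _ ≤ b u * (2 * C * |u|) := this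
        _ = 2 * C * (|u| * b u) := by ring
    · exact hbm.const_mul (2 * C)
    · filter_upwards with u using hGlim u
  -- pointwise convolution identity
  have hconv : ∀ s : ℝ, (∫ u, b u * (v (s - u) - v s)) =
      (∫ y, b (s - y) * v y) - v s := by
    intro s
    have e1 : (∫ y, b (s - y) * v y) = ∫ u, b u * v (s - u) := by
      have e : (fun y => b (s - y) * v y) = fun y => (fun x => b x * v (s - x)) (s - y) := by
        funext y
        simp [sub_sub_cancel]
      rw [e, integral_sub_left_eq_self (fun x => b x * v (s - x)) volume s]
    have i1 : Integrable (fun u => b u * v (s - u)) := by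
      refine (hbI.const_mul C).mono'
        (hbI.1.mul ((hvm.comp (measurable_const.sub measurable_id)).aestronglyMeasurable)) ?_
      filter_upwards with u
      rw [Real.norm_eq_abs, abs_mul, abs_of_nonneg (hb0 u), abs_of_nonneg (hv0 _), mul_comm C]
      exact mul_le_mul_of_nonneg_left (hC _) (hb0 u)
    have i2 : Integrable (fun u => b u * v s) := hbI.mul_const _
    simp_rw [mul_sub]
    rw [integral_sub i1 i2, integral_mul_const, hb1, one_mul, e1]
  -- eventual equality of the two expressions
  have heq : (fun r : ℝ => ∫ u, G r u) =ᶠ[atTop]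
      fun r : ℝ => ∫ s in (-r)..r, ((∫ y, b (s - y) * v y) - v s) := by
    filter_upwards [eventually_ge_atTop (0:ℝ)] with r hr
    have hle : (-r) ≤ r := by linarith
    have inner : ∀ u : ℝ, ∫ s in Ioc (-r) r, b u * (v (s - u) - v s) = G r u := by
      intro u
      rw [← intervalIntegral.integral_of_le hle]
      have hAnt : Antitone fun s => v (s - u) := fun x y hxy => hmono (sub_le_sub_right hxy u)
      have iA : IntervalIntegrable (fun s => v (s - u)) volume (-r) r :=
        hAnt.intervalIntegrable
      rw [intervalIntegral.integral_const_mul, intervalIntegral.integral_sub iA (hvint _ _),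
        intervalIntegral.integral_comp_sub_right v u, hFrep, hFrep, hGdef]
      ring
    have hint : Integrable (Function.uncurry fun u s => b u * (v (s - u) - v s))
        (volume.prod (volume.restrict (Ioc (-r) r))) := by
      have hasm : AEStronglyMeasurable
          (Function.uncurry fun u s => b u * (v (s - u) - v s))
          (volume.prod (volume.restrict (Ioc (-r) r))) := by
        refine AEStronglyMeasurable.mul ?_ ?_
        · exact hbI.1.comp_fst
        · exact ((hvm.comp (measurable_snd.sub measurable_fst)).sub
            (hvm.comp measurable_snd)).aestronglyMeasurable
      refine (Integrable.mul_prod hbI (integrable_const C)).mono' hasm ?_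
      filter_upwards with z
      rw [Function.uncurry]
      simp only [Real.norm_eq_abs, abs_mul, abs_of_nonneg (hb0 z.1)]
      refine mul_le_mul_of_nonneg_left ?_ (hb0 z.1)
      rw [abs_sub_le_iff]
      constructor <;> [linarith [hv0 (z.2 - z.1), hC z.2, hv0 z.2, hC (z.2 - z.1)];
        linarith [hv0 (z.2 - z.1), hC z.2, hv0 z.2, hC (z.2 - z.1)]]
    calc ∫ u, G r u
        = ∫ u, ∫ s in Ioc (-r) r, b u * (v (s - u) - v s) := by
          simp_rw [inner]
      _ = ∫ s in Ioc (-r) r, ∫ u, b u * (v (s - u) - v s) :=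
          integral_integral_swap hint
      _ = ∫ s in (-r)..r, ((∫ y, b (s - y) * v y) - v s) := by
          rw [intervalIntegral.integral_of_le hle]
          simp_rw [hconv]
  exact hmain.congr' heq

end
end

section
/- Assume (A1), (A5) and (A9), and let 𝔪 := κ ∫ x a(x) dx ∈ ℝ^d. Then there exists α₀ > 0 such that for every α ∈ (0, α₀) there exists T = T(α) > 0 such that for every q > 0 the function w(x,t) = q·exp(−|x − t𝔪|²/(α t)) satisfies ∂w/∂t(x,t) − κ(a∗w)(x,t) + m w(x,t) ≤ 0 for all x ∈ ℝ^d and all t > T (i.e. w is a subsolution of the linear equation ∂v/∂t = κ a∗v − mv for t > T). -/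
open MeasureTheory Filter Topology
open scoped RealInnerProductSpace

noncomputable section

variable {d : ℕ}

/-- `u³/27 ≤ exp u` for nonnegative `u`. -/
private lemma cube_div_le_exp {u : ℝ} (hu : 0 ≤ u) : u ^ 3 / 27 ≤ Real.exp u := by
  have h1 : u / 3 ≤ Real.exp (u / 3) := by
    nlinarith [Real.add_one_le_exp (u / 3)]
  have h2 : (u / 3) ^ 3 ≤ Real.exp (u / 3) ^ 3 := by
    apply pow_le_pow_left₀ (by positivity) h1
  have h3 : Real.exp (u / 3) ^ 3 = Real.exp u := by
    rw [← Real.exp_nat_mul]; congr 1; push_cast; ring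
  calc u ^ 3 / 27 = (u / 3) ^ 3 := by ring
    _ ≤ Real.exp (u / 3) ^ 3 := h2
    _ = Real.exp u := h3


set_option maxHeartbeats 2000000 in
/-- A Gaussian subsolution for the linearized equation `∂ₜv = κ a∗v − m v`
(Proposition `subsolutiontolinear`). -/
theorem statement13 (d : ℕ) (hd : 1 ≤ d) (κ m : ℝ) (hκ : 0 < κ) (hm : 0 < m)
    (a : EucSp d → ℝ) (ha0 : ∀ x, 0 ≤ a x) (haI : Integrable a)
    (haN : (∫ x, a x) = 1)
    (hA1 : m < κ) (hA5 : assumA5 a) (hA9 : assumA9 a)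
    (𝔪 : EucSp d) (h𝔪 : 𝔪 = κ • ∫ y, a y • y) :
    ∃ α₀ > (0 : ℝ), ∀ α ∈ Set.Ioo (0 : ℝ) α₀, ∃ T > (0 : ℝ), ∀ q > (0 : ℝ),
      ∀ x : EucSp d, ∀ t > T,
        deriv (fun s : ℝ => q * Real.exp (-‖x - s • 𝔪‖ ^ 2 / (α * s))) t
          - κ * (∫ y, a (x - y) * (q * Real.exp (-‖y - t • 𝔪‖ ^ 2 / (α * t))))
          + m * (q * Real.exp (-‖x - t • 𝔪‖ ^ 2 / (α * t))) ≤ 0 := by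
  classical
  obtain ⟨ρ, hρ, hρa⟩ := hA5
  have hA9' : Integrable (fun y : EucSp d => ‖y‖ * a y) := hA9
  have hameas : AEStronglyMeasurable a (volume : Measure (EucSp d)) := haI.1
  set β : ℝ := κ - m with hβdef
  have hβ : 0 < β := sub_pos.2 hA1
  set K₁ : ℝ := ∫ y, ‖y‖ * a y with hK₁def
  have hK₁0 : 0 ≤ K₁ := integral_nonneg fun y => mul_nonneg (norm_nonneg y) (ha0 y)
  set V : ℝ := (volume (Metric.ball (0 : EucSp d) (ρ / 4))).toReal with hVdef
  have hV : 0 < V := by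
    rw [hVdef]
    apply ENNReal.toReal_pos
    · exact (Metric.measure_ball_pos volume 0 (by positivity)).ne'
    · exact measure_ball_lt_top.ne
  have d1 : (0:ℝ) < κ * ρ ^ 3 * V := mul_pos (mul_pos hκ (pow_pos hρ 3)) hV
  have d2 : (0:ℝ) < ρ ^ 2 * V := mul_pos (pow_pos hρ 2) hV
  have d3 : (0:ℝ) < κ * ρ * V := mul_pos (mul_pos hκ hρ) hV
  set u₀ : ℝ := 1 + 324 / (κ * ρ ^ 3 * V) + 324 * K₁ / (ρ ^ 2 * V) + 81 * m / (κ * ρ * V)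
    with hu₀def
  have hn1 : (0:ℝ) ≤ 324 / (κ * ρ ^ 3 * V) := le_of_lt (div_pos (by norm_num) d1)
  have hn2 : (0:ℝ) ≤ 324 * K₁ / (ρ ^ 2 * V) := div_nonneg (by linarith) d2.le
  have hn3 : (0:ℝ) ≤ 81 * m / (κ * ρ * V) := div_nonneg (by linarith) d3.le
  have hu₀1 : 1 ≤ u₀ := by rw [hu₀def]; linarith
  have hu₀pos : 0 < u₀ := lt_of_lt_of_le one_pos hu₀1
  set c₁ : ℝ := 2 * u₀ / ρ with hc₁def
  have hc₁ : 0 < c₁ := div_pos (by linarith) hρ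
  clear_value β K₁ V u₀ c₁
  -- choose the truncation radius R
  obtain ⟨R, hR0, hAR, hKR⟩ :
      ∃ R : ℝ, 0 ≤ R ∧ (1 - β / (8 * κ) ≤ ∫ z in Metric.closedBall (0 : EucSp d) R, a z) ∧
        K₁ - (∫ z in Metric.closedBall (0 : EucSp d) R, ‖z‖ * a z) ≤ β / (16 * κ * c₁) := by
    have hsm : ∀ i : ℕ, MeasurableSet (Metric.closedBall (0 : EucSp d) (i : ℝ)) :=
      fun i => measurableSet_closedBall
    have hmono : Monotone fun i : ℕ => Metric.closedBall (0 : EucSp d) (i : ℝ) := by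
      intro i j hij
      exact Metric.closedBall_subset_closedBall (by exact_mod_cast hij)
    have hU : ⋃ i : ℕ, Metric.closedBall (0 : EucSp d) (i : ℝ) = Set.univ := by
      ext z
      simp only [Set.mem_iUnion, Metric.mem_closedBall, Set.mem_univ, iff_true,
        dist_zero_right]
      exact exists_nat_ge ‖z‖
    have t1 : Tendsto (fun i : ℕ => ∫ z in Metric.closedBall (0 : EucSp d) (i : ℝ), a z)
        atTop (𝓝 1) := by
      have h := MeasureTheory.tendsto_setIntegral_of_monotone hsm hmono
        (by rw [hU]; exact haI.integrableOn)
      rwa [hU, MeasureTheory.setIntegral_univ, haN] at h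
    have t2 : Tendsto (fun i : ℕ => ∫ z in Metric.closedBall (0 : EucSp d) (i : ℝ), ‖z‖ * a z)
        atTop (𝓝 K₁) := by
      have h := MeasureTheory.tendsto_setIntegral_of_monotone hsm hmono
        (by rw [hU]; exact hA9'.integrableOn)
      rw [hU, MeasureTheory.setIntegral_univ, ← hK₁def] at h
      exact h
    have h16 : (0:ℝ) < 16 * κ * c₁ := mul_pos (mul_pos (by norm_num) hκ) hc₁
    have hlt1 : 1 - β / (8 * κ) < 1 := by
      have : 0 < β / (8 * κ) := div_pos hβ (by positivity); linarith
    have hlt2 : K₁ - β / (16 * κ * c₁) < K₁ := by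
      have : 0 < β / (16 * κ * c₁) := div_pos hβ h16; linarith
    have e1 := t1.eventually (eventually_gt_nhds hlt1)
    have e2 := t2.eventually (eventually_gt_nhds hlt2)
    obtain ⟨i, h1, h2⟩ := (e1.and e2).exists
    exact ⟨(i : ℝ), Nat.cast_nonneg i, h1.le, by linarith⟩
  set C₂ : ℝ := 1 + 2 * c₁ * K₁ with hC₂def
  have hC₂ : 1 ≤ C₂ := by
    rw [hC₂def]; nlinarith only [hc₁.le, hK₁0]
  clear_value C₂
  have hc₁sq : (0:ℝ) < 4 * c₁ ^ 2 := by positivity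
  refine ⟨min 1 (β / (4 * c₁ ^ 2)), lt_min one_pos (div_pos hβ hc₁sq), ?_⟩
  rintro α ⟨hα0, hαlt⟩
  have hα1 : α ≤ 1 := (lt_of_lt_of_le hαlt (min_le_left _ _)).le
  have hαc₁ : α * c₁ ^ 2 ≤ β / 4 := by
    have h := lt_of_lt_of_le hαlt (min_le_right _ _)
    rw [lt_div_iff₀ hc₁sq] at h
    linarith only [h]
  have hT2pos : 0 < 2 * ρ / (c₁ * α) := div_pos (by linarith) (mul_pos hc₁ hα0)
  refine ⟨max (2 * κ * R ^ 2 * C₂ / (α * β)) (2 * ρ / (c₁ * α)), ?_, ?_⟩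
  · exact lt_max_iff.mpr (Or.inr hT2pos)
  intro q hq x t ht
  have ht2 : 2 * ρ / (c₁ * α) < t := lt_of_le_of_lt (le_max_right _ _) ht
  have ht1 : 2 * κ * R ^ 2 * C₂ / (α * β) < t := lt_of_le_of_lt (le_max_left _ _) ht
  have ht0 : 0 < t := lt_trans (div_pos (by linarith) (mul_pos hc₁ hα0)) ht2
  have hαt : 0 < α * t := mul_pos hα0 ht0
  set ξ : EucSp d := x - t • 𝔪 with hξdef
  set W : ℝ := q * Real.exp (-‖ξ‖ ^ 2 / (α * t)) with hWdef
  have hW : 0 < W := mul_pos hq (Real.exp_pos _)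
  clear_value ξ W
  set E : EucSp d → ℝ := fun z => Real.exp ((2 * ⟪ξ, z⟫ - ‖z‖ ^ 2) / (α * t)) with hEdef
  have hEval : ∀ z, E z = Real.exp ((2 * ⟪ξ, z⟫ - ‖z‖ ^ 2) / (α * t)) := fun z => rfl
  have hEpos : ∀ z, 0 < E z := fun z => Real.exp_pos _
  have hEcont : Continuous E := by
    apply Real.continuous_exp.comp
    exact ((continuous_const.mul (continuous_const.inner continuous_id)).sub
      (continuous_norm.pow 2)).div_const _
  clear_value E
  have hEle : ∀ z, a z * E z ≤ Real.exp (‖ξ‖ ^ 2 / (α * t)) * a z := by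
    intro z
    have h1 : (2 * ⟪ξ, z⟫ - ‖z‖ ^ 2) / (α * t) ≤ ‖ξ‖ ^ 2 / (α * t) := by
      apply div_le_div_of_nonneg_right _ hαt.le
      nlinarith [real_inner_le_norm ξ z, sq_nonneg (‖ξ‖ - ‖z‖)]
    calc a z * E z ≤ a z * Real.exp (‖ξ‖ ^ 2 / (α * t)) := by
          rw [hEval z]; exact mul_le_mul_of_nonneg_left (Real.exp_le_exp.2 h1) (ha0 z)
      _ = _ := mul_comm _ _
  have hIint : Integrable (fun z => a z * E z) := by
    refine Integrable.mono' (haI.const_mul (Real.exp (‖ξ‖ ^ 2 / (α * t))))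
      (hameas.mul hEcont.aestronglyMeasurable) (Filter.Eventually.of_forall fun z => ?_)
    rw [Real.norm_eq_abs, abs_of_nonneg (mul_nonneg (ha0 z) (hEpos z).le)]
    exact hEle z
  have hinner_cont : Continuous fun z : EucSp d => ⟪ξ, z⟫ :=
    continuous_const.inner continuous_id
  have hazb : ∀ z : EucSp d, |a z * ⟪ξ, z⟫| ≤ ‖ξ‖ * (‖z‖ * a z) := by
    intro z
    rw [abs_mul, abs_of_nonneg (ha0 z)]
    calc a z * |⟪ξ, z⟫| ≤ a z * (‖ξ‖ * ‖z‖) :=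
          mul_le_mul_of_nonneg_left (abs_real_inner_le_norm ξ z) (ha0 z)
      _ = ‖ξ‖ * (‖z‖ * a z) := by ring
  have haz_int : Integrable (fun z => a z * ⟪ξ, z⟫) := by
    refine Integrable.mono' (hA9'.const_mul ‖ξ‖)
      (hameas.mul hinner_cont.aestronglyMeasurable) (Filter.Eventually.of_forall fun z => ?_)
    rw [Real.norm_eq_abs]
    exact hazb z
  set J : ℝ := ∫ z, a z * ⟪ξ, z⟫ with hJdef
  clear_value J
  have hJ_le : |J| ≤ ‖ξ‖ * K₁ := by
    have h1 : |J| ≤ ∫ z, |a z * ⟪ξ, z⟫| := by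
      rw [hJdef]
      have h0 := norm_integral_le_integral_norm (μ := volume) (fun z => a z * ⟪ξ, z⟫)
      simp only [Real.norm_eq_abs] at h0
      exact h0
    have h2 : (∫ z, |a z * ⟪ξ, z⟫|) ≤ ∫ z, ‖ξ‖ * (‖z‖ * a z) :=
      integral_mono haz_int.abs (hA9'.const_mul ‖ξ‖) hazb
    have h3 : (∫ z, ‖ξ‖ * (‖z‖ * a z)) = ‖ξ‖ * K₁ := by
      rw [hK₁def, MeasureTheory.integral_const_mul]
    linarith
  have hay_int : Integrable (fun y : EucSp d => a y • y) := by
    refine Integrable.mono' hA9' (hameas.smul aestronglyMeasurable_id)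
      (Filter.Eventually.of_forall fun y => ?_)
    rw [norm_smul, Real.norm_eq_abs, abs_of_nonneg (ha0 y)]
    exact le_of_eq (mul_comm _ _)
  have hinner𝔪 : ⟪ξ, 𝔪⟫ = κ * J := by
    rw [h𝔪, real_inner_smul_right, ← integral_inner hay_int]
    simp_rw [real_inner_smul_right]
    rw [hJdef]
  -- the derivative
  have hd : deriv (fun s : ℝ => q * Real.exp (-‖x - s • 𝔪‖ ^ 2 / (α * s))) t
      = W * ((‖x‖ ^ 2 / t ^ 2 - ‖𝔪‖ ^ 2) / α) := by
    have heq : ∀ s : ℝ, s ≠ 0 → -‖x - s • 𝔪‖ ^ 2 / (α * s)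
        = -(‖x‖ ^ 2 * s⁻¹ - 2 * ⟪x, 𝔪⟫ + s * ‖𝔪‖ ^ 2) / α := by
      intro s hs
      have hn : ‖x - s • 𝔪‖ ^ 2 = ‖x‖ ^ 2 - 2 * (s * ⟪x, 𝔪⟫) + s ^ 2 * ‖𝔪‖ ^ 2 := by
        rw [norm_sub_sq_real, real_inner_smul_right, norm_smul, Real.norm_eq_abs,
          mul_pow, sq_abs]
      rw [hn]
      field_simp
    have hF : HasDerivAt (fun s : ℝ => ‖x‖ ^ 2 * s⁻¹ - 2 * ⟪x, 𝔪⟫ + s * ‖𝔪‖ ^ 2)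
        (‖x‖ ^ 2 * -(t ^ 2)⁻¹ + 1 * ‖𝔪‖ ^ 2) t :=
      (((hasDerivAt_inv ht0.ne').const_mul (‖x‖ ^ 2)).sub_const (2 * ⟪x, 𝔪⟫)).add
        ((hasDerivAt_id' t).mul_const (‖𝔪‖ ^ 2))
    have hG : HasDerivAt
        (fun s : ℝ => q * Real.exp (-(‖x‖ ^ 2 * s⁻¹ - 2 * ⟪x, 𝔪⟫ + s * ‖𝔪‖ ^ 2) / α))
        (q * (Real.exp (-(‖x‖ ^ 2 * t⁻¹ - 2 * ⟪x, 𝔪⟫ + t * ‖𝔪‖ ^ 2) / α)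
          * (-(‖x‖ ^ 2 * -(t ^ 2)⁻¹ + 1 * ‖𝔪‖ ^ 2) / α))) t :=
      ((hF.neg.div_const α).exp).const_mul q
    have hev : (fun s : ℝ => q * Real.exp (-‖x - s • 𝔪‖ ^ 2 / (α * s)))
        =ᶠ[nhds t] fun s => q * Real.exp (-(‖x‖ ^ 2 * s⁻¹ - 2 * ⟪x, 𝔪⟫ + s * ‖𝔪‖ ^ 2) / α) := by
      filter_upwards [eventually_ne_nhds ht0.ne'] with s hs
      rw [heq s hs]
    rw [hev.deriv_eq, hG.deriv, ← heq t ht0.ne']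
    rw [hWdef, hξdef]
    have hval : -(‖x‖ ^ 2 * -(t ^ 2)⁻¹ + 1 * ‖𝔪‖ ^ 2) / α
        = (‖x‖ ^ 2 / t ^ 2 - ‖𝔪‖ ^ 2) / α := by
      field_simp
      ring
    rw [hval]
    have harg : -‖x - t • 𝔪‖ ^ 2 / (α * t) = -‖x - t • 𝔪‖ ^ 2 / (α * t) := rfl
    ring
  -- the convolution
  set I : ℝ := ∫ z, a z * E z with hIdef
  clear_value I
  have hconv : (∫ y, a (x - y) * (q * Real.exp (-‖y - t • 𝔪‖ ^ 2 / (α * t)))) = W * I := by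
    have h0 := MeasureTheory.integral_sub_left_eq_self
      (fun y => a (x - y) * (q * Real.exp (-‖y - t • 𝔪‖ ^ 2 / (α * t)))) volume x
    rw [← h0]
    have h1 : ∀ z : EucSp d,
        a (x - (x - z)) * (q * Real.exp (-‖(x - z) - t • 𝔪‖ ^ 2 / (α * t)))
        = W * (a z * E z) := by
      intro z
      have hxz : x - (x - z) = z := by abel
      have hsub : (x - z) - t • 𝔪 = ξ - z := by rw [hξdef]; abel
      rw [hxz, hsub, norm_sub_sq_real, hWdef, hEval z]
      rw [show -(‖ξ‖ ^ 2 - 2 * ⟪ξ, z⟫ + ‖z‖ ^ 2) / (α * t)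
          = -‖ξ‖ ^ 2 / (α * t) + (2 * ⟪ξ, z⟫ - ‖z‖ ^ 2) / (α * t) by ring, Real.exp_add]
      ring
    calc (∫ z, a (x - (x - z)) * (q * Real.exp (-‖(x - z) - t • 𝔪‖ ^ 2 / (α * t))))
        = ∫ z, W * (a z * E z) := by
          apply integral_congr_ae
          exact Filter.Eventually.of_forall h1
      _ = W * I := by rw [MeasureTheory.integral_const_mul, hIdef]
  rw [hd, hconv]
  have hx2 : (‖x‖ ^ 2 / t ^ 2 - ‖𝔪‖ ^ 2) / α
      = ‖ξ‖ ^ 2 / (α * t ^ 2) + 2 * (κ * J) / (α * t) := by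
    have hx : x = ξ + t • 𝔪 := by rw [hξdef]; abel
    have hxn : ‖x‖ ^ 2 = ‖ξ‖ ^ 2 + 2 * (t * (κ * J)) + t ^ 2 * ‖𝔪‖ ^ 2 := by
      conv_lhs => rw [hx]
      rw [norm_add_sq_real, real_inner_smul_right, hinner𝔪, norm_smul, Real.norm_eq_abs,
        mul_pow, sq_abs]
    rw [hxn]
    field_simp
    ring
  -- the key inequality
  have key : ‖ξ‖ ^ 2 / (α * t ^ 2) + 2 * (κ * J) / (α * t) + m ≤ κ * I := by
    set P : ℝ := ‖ξ‖ / (α * t) with hPdef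
    have hP0 : 0 ≤ P := div_nonneg (norm_nonneg _) hαt.le
    clear_value P
    have hPsq : ‖ξ‖ ^ 2 / (α * t ^ 2) = α * P ^ 2 := by
      rw [hPdef]; field_simp
    have hJr : 2 * (κ * J) / (α * t) = (2 * κ / (α * t)) * J := by ring
    by_cases hcase : ‖ξ‖ ≤ c₁ * (α * t)
    · -- moderate |ξ| : linearization on the ball of radius R
      set B : Set (EucSp d) := Metric.closedBall 0 R with hBdef
      have hBmeas : MeasurableSet B := measurableSet_closedBall
      set A : ℝ := ∫ z in B, a z with hAdef
      set JR : ℝ := ∫ z in B, a z * ⟪ξ, z⟫ with hJRdef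
      set KR : ℝ := ∫ z in B, ‖z‖ * a z with hKRdef
      set c : ℝ := R ^ 2 / (α * t) with hcdef
      have hc0 : 0 ≤ c := div_nonneg (sq_nonneg R) hαt.le
      set ec : ℝ := Real.exp (-c) with hecdef
      have hecpos : 0 < ec := Real.exp_pos _
      have hec1 : ec ≤ 1 := by
        rw [hecdef]
        have h := Real.exp_le_exp.2 (neg_nonpos.2 hc0)
        rwa [Real.exp_zero] at h
      have heclb : 1 - c ≤ ec := by
        have h := Real.add_one_le_exp (-c); rw [hecdef]; linarith only [h]
      have hA0 : 0 ≤ A := setIntegral_nonneg hBmeas fun z _ => ha0 z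
      have hA1' : A ≤ 1 := by
        have h : A ≤ ∫ z, a z :=
          setIntegral_le_integral haI (Filter.Eventually.of_forall ha0)
        rw [haN] at h
        exact h
      have hKR0 : 0 ≤ KR := setIntegral_nonneg hBmeas fun z _ =>
        mul_nonneg (norm_nonneg z) (ha0 z)
      have hKRle : KR ≤ K₁ := by
        have h : KR ≤ ∫ z, ‖z‖ * a z :=
          setIntegral_le_integral hA9' (Filter.Eventually.of_forall fun z =>
            mul_nonneg (norm_nonneg z) (ha0 z))
        rw [← hK₁def] at h
        exact h
      clear_value A JR KR c ec
      have hJR_le : |JR| ≤ ‖ξ‖ * KR := by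
        have h1 : |JR| ≤ ∫ z in B, |a z * ⟪ξ, z⟫| := by
          rw [hJRdef]
          have h0 := norm_integral_le_integral_norm (μ := volume.restrict B)
            (fun z => a z * ⟪ξ, z⟫)
          simp only [Real.norm_eq_abs] at h0
          exact h0
        have h2 : (∫ z in B, |a z * ⟪ξ, z⟫|) ≤ ∫ z in B, ‖ξ‖ * (‖z‖ * a z) :=
          setIntegral_mono_on haz_int.abs.integrableOn
            ((hA9'.const_mul ‖ξ‖).integrableOn) hBmeas fun z _ => hazb z
        have h3 : (∫ z in B, ‖ξ‖ * (‖z‖ * a z)) = ‖ξ‖ * KR := by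
          rw [hKRdef, MeasureTheory.integral_const_mul]
        linarith only [h1, h2, h3]
      -- tail bounds
      have hsplit1 : JR + (∫ z in Bᶜ, a z * ⟪ξ, z⟫) = J := by
        rw [hJRdef, hJdef]
        exact MeasureTheory.integral_add_compl hBmeas haz_int
      have hsplit2 : KR + (∫ z in Bᶜ, ‖z‖ * a z) = K₁ := by
        rw [hKRdef, hK₁def]
        exact MeasureTheory.integral_add_compl hBmeas hA9'
      have htail : |J - JR| ≤ ‖ξ‖ * (K₁ - KR) := by
        have h1 : J - JR = ∫ z in Bᶜ, a z * ⟪ξ, z⟫ := by linarith only [hsplit1]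
        have h2 : |∫ z in Bᶜ, a z * ⟪ξ, z⟫| ≤ ∫ z in Bᶜ, |a z * ⟪ξ, z⟫| := by
          have h0 := norm_integral_le_integral_norm (μ := volume.restrict Bᶜ)
            (fun z => a z * ⟪ξ, z⟫)
          simp only [Real.norm_eq_abs] at h0
          exact h0
        have h3 : (∫ z in Bᶜ, |a z * ⟪ξ, z⟫|) ≤ ∫ z in Bᶜ, ‖ξ‖ * (‖z‖ * a z) :=
          setIntegral_mono_on haz_int.abs.integrableOn
            ((hA9'.const_mul ‖ξ‖).integrableOn) hBmeas.compl fun z _ => hazb z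
        have h4 : (∫ z in Bᶜ, ‖ξ‖ * (‖z‖ * a z)) = ‖ξ‖ * (K₁ - KR) := by
          rw [MeasureTheory.integral_const_mul]
          have h5 : (∫ z in Bᶜ, ‖z‖ * a z) = K₁ - KR := by linarith only [hsplit2]
          rw [h5]
        rw [h1]
        linarith only [h2, h3, h4]
      -- lower bound on I
      have hpoint : ∀ z ∈ B, ec * a z + ec * (2 / (α * t)) * (a z * ⟪ξ, z⟫) ≤ a z * E z := by
        intro z hz
        have hzR : ‖z‖ ≤ R := by
          rwa [hBdef, Metric.mem_closedBall, dist_zero_right] at hz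
        have h1 : -c + 2 * ⟪ξ, z⟫ / (α * t) ≤ (2 * ⟪ξ, z⟫ - ‖z‖ ^ 2) / (α * t) := by
          have h2 : (2 * ⟪ξ, z⟫ - R ^ 2) / (α * t) ≤ (2 * ⟪ξ, z⟫ - ‖z‖ ^ 2) / (α * t) := by
            apply div_le_div_of_nonneg_right _ hαt.le
            nlinarith only [norm_nonneg z, hzR]
          have h3 : -c + 2 * ⟪ξ, z⟫ / (α * t) = (2 * ⟪ξ, z⟫ - R ^ 2) / (α * t) := by
            rw [hcdef]; ring
          linarith only [h2, h3]
        have h4 : ec * (1 + 2 * ⟪ξ, z⟫ / (α * t)) ≤ E z := by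
          calc ec * (1 + 2 * ⟪ξ, z⟫ / (α * t))
              ≤ ec * Real.exp (2 * ⟪ξ, z⟫ / (α * t)) := by
                apply mul_le_mul_of_nonneg_left _ hecpos.le
                linarith only [Real.add_one_le_exp (2 * ⟪ξ, z⟫ / (α * t))]
            _ = Real.exp (-c + 2 * ⟪ξ, z⟫ / (α * t)) := by
                rw [hecdef, ← Real.exp_add]
            _ ≤ E z := by rw [hEval z]; exact Real.exp_le_exp.2 h1
        calc ec * a z + ec * (2 / (α * t)) * (a z * ⟪ξ, z⟫)
            = a z * (ec * (1 + 2 * ⟪ξ, z⟫ / (α * t))) := by ring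
          _ ≤ a z * E z := mul_le_mul_of_nonneg_left h4 (ha0 z)
      have hIlb : ec * A + ec * (2 / (α * t)) * JR ≤ I := by
        have hint1 : IntegrableOn (fun z => ec * a z) B volume :=
          haI.integrableOn.const_mul ec
        have hint2 : IntegrableOn (fun z => ec * (2 / (α * t)) * (a z * ⟪ξ, z⟫)) B volume :=
          haz_int.integrableOn.const_mul _
        have h5 : (∫ z in B, (ec * a z + ec * (2 / (α * t)) * (a z * ⟪ξ, z⟫)))
            = ec * A + ec * (2 / (α * t)) * JR := by
          rw [MeasureTheory.integral_add hint1 hint2, MeasureTheory.integral_const_mul,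
            MeasureTheory.integral_const_mul, hAdef, hJRdef]
        calc ec * A + ec * (2 / (α * t)) * JR
            = ∫ z in B, (ec * a z + ec * (2 / (α * t)) * (a z * ⟪ξ, z⟫)) := h5.symm
          _ ≤ ∫ z in B, a z * E z :=
            setIntegral_mono_on (hint1.add hint2) hIint.integrableOn hBmeas hpoint
          _ ≤ I := by
            rw [hIdef]
            exact setIntegral_le_integral hIint (Filter.Eventually.of_forall fun z =>
              mul_nonneg (ha0 z) (hEpos z).le)
      -- numeric facts
      have hPc₁ : P ≤ c₁ := by
        rw [hPdef, div_le_iff₀ hαt]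
        linarith only [hcase]
      have hPval : ‖ξ‖ = P * (α * t) := by
        rw [hPdef]; field_simp
      have hcC : κ * c + κ * c * (2 * c₁ * K₁) ≤ β / 2 := by
        have h5 : 2 * κ * R ^ 2 * C₂ < t * (α * β) := by
          rw [div_lt_iff₀ (mul_pos hα0 hβ)] at ht1
          linarith only [ht1]
        rw [hC₂def] at h5
        have h6 : κ * c + κ * c * (2 * c₁ * K₁)
            = (κ * R ^ 2 * (1 + 2 * c₁ * K₁)) / (α * t) := by
          rw [hcdef]; field_simp
        rw [h6, div_le_iff₀ hαt]
        nlinarith only [h5]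
      have hεbound : 2 * κ * c₁ * (K₁ - KR) ≤ β / 8 := by
        have h6 : (0:ℝ) < 16 * κ * c₁ := mul_pos (mul_pos (by norm_num) hκ) hc₁
        rw [le_div_iff₀ h6] at hKR
        nlinarith only [hKR]
      have hAk : κ - β / 8 ≤ κ * A := by
        have h7 : κ * (1 - β / (8 * κ)) ≤ κ * A := mul_le_mul_of_nonneg_left hAR hκ.le
        have h8 : κ * (1 - β / (8 * κ)) = κ - β / 8 := by
          field_simp
        linarith only [h7, h8]
      have hs1 : κ - β / 8 - κ * c ≤ κ * (ec * A) := by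
        have h7 : (1 - c) * A ≤ ec * A := mul_le_mul_of_nonneg_right heclb hA0
        have h8 : κ * ((1 - c) * A) ≤ κ * (ec * A) := mul_le_mul_of_nonneg_left h7 hκ.le
        have h9 : c * A ≤ c := mul_le_of_le_one_right hc0 hA1'
        nlinarith only [h8, h9, hAk, hκ.le]
      have hJRK : |JR| ≤ ‖ξ‖ * K₁ :=
        le_trans hJR_le (mul_le_mul_of_nonneg_left hKRle (norm_nonneg _))
      have hs2 : -(β / 8) - κ * c * (2 * c₁ * K₁) ≤ (2 * κ / (α * t)) * (ec * JR - J) := by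
        have habs : |ec * JR - J| ≤ ‖ξ‖ * (K₁ - KR) + c * (‖ξ‖ * K₁) := by
          have h9 : ec * JR - J = (JR - J) + (ec - 1) * JR := by ring
          have h10 : |(ec - 1) * JR| ≤ c * (‖ξ‖ * K₁) := by
            rw [abs_mul]
            have h11 : |ec - 1| ≤ c := by
              rw [abs_le]; constructor
              · linarith only [heclb]
              · linarith only [hec1, hc0]
            exact mul_le_mul h11 hJRK (abs_nonneg _) hc0
          have h12 : |JR - J| ≤ ‖ξ‖ * (K₁ - KR) := by
            rw [abs_sub_comm]; exact htail
          calc |ec * JR - J| = |(JR - J) + (ec - 1) * JR| := by rw [h9]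
            _ ≤ |JR - J| + |(ec - 1) * JR| := abs_add_le _ _
            _ ≤ ‖ξ‖ * (K₁ - KR) + c * (‖ξ‖ * K₁) := by linarith only [h10, h12]
        have h13 : (0:ℝ) ≤ 2 * κ / (α * t) := div_nonneg (by linarith only [hκ]) hαt.le
        have h14 : -((2 * κ / (α * t)) * |ec * JR - J|)
            ≤ (2 * κ / (α * t)) * (ec * JR - J) := by
          linarith only [mul_le_mul_of_nonneg_left (neg_abs_le (ec * JR - J)) h13]
        have h15 : (2 * κ / (α * t)) * (‖ξ‖ * (K₁ - KR) + c * (‖ξ‖ * K₁))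
            = 2 * κ * P * (K₁ - KR) + 2 * κ * P * c * K₁ := by
          rw [hPval]
          field_simp
        have h16 : (2 * κ / (α * t)) * |ec * JR - J|
            ≤ 2 * κ * P * (K₁ - KR) + 2 * κ * P * c * K₁ := by
          rw [← h15]
          exact mul_le_mul_of_nonneg_left habs h13
        have h17 : 2 * κ * P * (K₁ - KR) ≤ 2 * κ * c₁ * (K₁ - KR) := by
          have h := mul_le_mul_of_nonneg_right hPc₁ (sub_nonneg.2 hKRle)
          nlinarith only [h, hκ.le]
        have h18 : 2 * κ * P * c * K₁ ≤ 2 * κ * c₁ * c * K₁ := by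
          have h := mul_le_mul_of_nonneg_right hPc₁ (mul_nonneg hc0 hK₁0)
          nlinarith only [h, hκ.le]
        linarith only [h14, h16, h17, h18, hεbound]
      have hIκ : κ * (ec * A) + (2 * κ / (α * t)) * (ec * JR) ≤ κ * I := by
        have h19 := mul_le_mul_of_nonneg_left hIlb hκ.le
        have h20 : κ * (ec * A + ec * (2 / (α * t)) * JR)
            = κ * (ec * A) + (2 * κ / (α * t)) * (ec * JR) := by ring
        linarith only [h19, h20]
      have hfinal : m + β / 4 ≤ κ * I - (2 * κ / (α * t)) * J := by
        have h21 : (2 * κ / (α * t)) * (ec * JR) - (2 * κ / (α * t)) * J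
            = (2 * κ / (α * t)) * (ec * JR - J) := by ring
        have hβκ : κ = m + β := by rw [hβdef]; ring
        linarith only [hIκ, hs1, hs2, hcC, h21, hβκ]
      have hαP : α * P ^ 2 ≤ β / 4 := by
        have h := mul_le_mul_of_nonneg_left (mul_self_le_mul_self hP0 hPc₁) hα0.le
        nlinarith only [h, hαc₁]
      rw [hPsq, hJr]
      linarith only [hαP, hfinal]
    · -- large |ξ| : use the kernel lower bound on a small ball
      push_neg at hcase
      have hξρ : 2 * ρ < ‖ξ‖ := by
        have h20 : 0 < c₁ * α := mul_pos hc₁ hα0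
        rw [div_lt_iff₀ h20] at ht2
        calc 2 * ρ < t * (c₁ * α) := ht2
          _ = c₁ * (α * t) := by ring
          _ < ‖ξ‖ := hcase
      have hξ0 : 0 < ‖ξ‖ := by linarith only [hξρ, hρ]
      set e : EucSp d := ‖ξ‖⁻¹ • ξ with hedef
      have hinner_e : ⟪ξ, e⟫ = ‖ξ‖ := by
        rw [hedef, real_inner_smul_right, real_inner_self_eq_norm_sq]
        field_simp
      have hnorm_e : ‖e‖ = 1 := by
        rw [hedef, norm_smul, Real.norm_eq_abs, abs_of_nonneg (inv_nonneg.2 (norm_nonneg ξ))]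
        field_simp
      set S : Set (EucSp d) := Metric.ball ((3 * ρ / 4) • e) (ρ / 4) with hSdef
      have hSmeas : MeasurableSet S := measurableSet_ball
      clear_value e
      set L : ℝ := (ρ * ‖ξ‖ - ρ ^ 2) / (α * t) with hLdef
      have hz_prop : ∀ z ∈ S, ‖z‖ < ρ ∧ ρ * ‖ξ‖ ≤ 2 * ⟪ξ, z⟫ := by
        intro z hz
        rw [hSdef, Metric.mem_ball, dist_eq_norm] at hz
        have hsm : ‖(3 * ρ / 4) • e‖ = 3 * ρ / 4 := by
          rw [norm_smul, Real.norm_eq_abs, hnorm_e, mul_one, abs_of_nonneg (by linarith only [hρ] : (0:ℝ) ≤ 3 * ρ / 4)]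
        constructor
        · calc ‖z‖ = ‖(3 * ρ / 4) • e + (z - (3 * ρ / 4) • e)‖ := by congr 1; abel
            _ ≤ ‖(3 * ρ / 4) • e‖ + ‖z - (3 * ρ / 4) • e‖ := norm_add_le _ _
            _ < 3 * ρ / 4 + ρ / 4 := by rw [hsm]; linarith only [hz]
            _ = ρ := by ring
        · have h21 : ⟪ξ, z⟫ = (3 * ρ / 4) * ‖ξ‖ + ⟪ξ, z - (3 * ρ / 4) • e⟫ := by
            have hzz : z = (3 * ρ / 4) • e + (z - (3 * ρ / 4) • e) := by abel
            conv_lhs => rw [hzz]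
            rw [inner_add_right, real_inner_smul_right, hinner_e]
          have h22 : -(‖ξ‖ * (ρ / 4)) ≤ ⟪ξ, z - (3 * ρ / 4) • e⟫ := by
            have h23 := abs_real_inner_le_norm ξ (z - (3 * ρ / 4) • e)
            have h24 : ‖ξ‖ * ‖z - (3 * ρ / 4) • e‖ ≤ ‖ξ‖ * (ρ / 4) :=
              mul_le_mul_of_nonneg_left hz.le (norm_nonneg ξ)
            have h25 := neg_abs_le ⟪ξ, z - (3 * ρ / 4) • e⟫
            linarith only [h23, h24, h25]
          linarith only [h21, h22]
      have hae : ∀ᵐ z ∂(volume.restrict S), ρ * Real.exp L ≤ a z * E z := by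
        filter_upwards [ae_restrict_mem hSmeas, ae_restrict_of_ae hρa] with z hzS hza
        obtain ⟨hz1, hz2⟩ := hz_prop z hzS
        have haz : ρ ≤ a z := hza (mem_ball_zero_iff.mpr hz1)
        have hLE : L ≤ (2 * ⟪ξ, z⟫ - ‖z‖ ^ 2) / (α * t) := by
          rw [hLdef]
          apply div_le_div_of_nonneg_right _ hαt.le
          nlinarith only [hz1, hz2, norm_nonneg z]
        have hEz : Real.exp L ≤ E z := by
          rw [hEval z]; exact Real.exp_le_exp.2 hLE
        exact mul_le_mul haz hEz (Real.exp_pos _).le (le_trans hρ.le haz)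
      have hvolS : (volume S).toReal = V := by
        rw [hSdef, hVdef, Measure.addHaar_ball_center]
      have hIlb2 : ρ * Real.exp L * V ≤ I := by
        have hconst : IntegrableOn (fun _ : EucSp d => ρ * Real.exp L) S volume := by
          rw [hSdef]
          exact integrableOn_const measure_ball_lt_top.ne
        calc ρ * Real.exp L * V = ∫ _ in S, ρ * Real.exp L := by
              rw [setIntegral_const, measureReal_def, hvolS, smul_eq_mul]; ring
          _ ≤ ∫ z in S, a z * E z :=
            setIntegral_mono_ae_restrict hconst hIint.integrableOn hae
          _ ≤ I := by
            rw [hIdef]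
            exact setIntegral_le_integral hIint (Filter.Eventually.of_forall fun z =>
              mul_nonneg (ha0 z) (hEpos z).le)
      -- numeric part
      set u : ℝ := ρ * ‖ξ‖ / (2 * (α * t)) with hudef
      clear_value u
      have huu₀ : u₀ ≤ u := by
        rw [hudef, le_div_iff₀ (by nlinarith only [hαt] : (0:ℝ) < 2 * (α * t))]
        have h30 : (2 * u₀ / ρ) * (α * t) < ‖ξ‖ := by
          rw [← hc₁def]; exact hcase
        have h31 : (2 * u₀ / ρ) * (α * t) = (2 * u₀ * (α * t)) / ρ := by ring
        rw [h31, div_lt_iff₀ hρ] at h30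
        linarith only [h30]
      have hu1 : 1 ≤ u := le_trans hu₀1 huu₀
      have hu0 : 0 < u := lt_of_lt_of_le one_pos hu1
      have hLu : u ≤ L := by
        rw [hudef, hLdef, div_le_div_iff₀ (by nlinarith only [hαt] : (0:ℝ) < 2 * (α * t)) hαt]
        linarith only [mul_pos hαt (mul_pos hρ (sub_pos.2 hξρ))]
      have hexp : u ^ 3 / 27 ≤ Real.exp L :=
        le_trans (cube_div_le_exp hu0.le) (Real.exp_le_exp.2 hLu)
      have hPu : ‖ξ‖ / (α * t) = 2 * u / ρ := by
        rw [hudef]; field_simp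
      have hb1 : ‖ξ‖ ^ 2 / (α * t ^ 2) ≤ 4 * u ^ 2 / ρ ^ 2 := by
        rw [hPsq, hPdef, hPu]
        have h32 : (2 * u / ρ) ^ 2 = 4 * u ^ 2 / ρ ^ 2 := by
          field_simp; ring
        rw [h32]
        have h33 : (0:ℝ) ≤ 4 * u ^ 2 / ρ ^ 2 := by positivity
        nlinarith only [h33, hα1]
      have hb2 : 2 * (κ * J) / (α * t) ≤ 4 * κ * K₁ * u / ρ := by
        have h30 : J ≤ ‖ξ‖ * K₁ := le_trans (le_abs_self J) hJ_le
        have h31 : 2 * (κ * J) / (α * t) ≤ 2 * (κ * (‖ξ‖ * K₁)) / (α * t) := by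
          apply div_le_div_of_nonneg_right _ hαt.le
          nlinarith only [h30, hκ.le]
        have h32 : 2 * (κ * (‖ξ‖ * K₁)) / (α * t) = 2 * κ * K₁ * (‖ξ‖ / (α * t)) := by
          ring
        have h33 : 2 * κ * K₁ * (2 * u / ρ) = 4 * κ * K₁ * u / ρ := by ring
        rw [h32, hPu, h33] at h31
        exact h31
      have a1 : 324 ≤ u * (κ * ρ ^ 3 * V) := by
        have h34 : 324 / (κ * ρ ^ 3 * V) ≤ u := by
          have h35 : 324 / (κ * ρ ^ 3 * V) ≤ u₀ := by
            rw [hu₀def]; linarith only [hn2, hn3]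
          linarith only [h35, huu₀]
        rwa [div_le_iff₀ d1] at h34
      have a2 : 324 * K₁ ≤ u ^ 2 * (ρ ^ 2 * V) := by
        have h34 : 324 * K₁ / (ρ ^ 2 * V) ≤ u := by
          have h35 : 324 * K₁ / (ρ ^ 2 * V) ≤ u₀ := by
            rw [hu₀def]; linarith only [hn1, hn3]
          linarith only [h35, huu₀]
        rw [div_le_iff₀ d2] at h34
        nlinarith only [h34, hu1, mul_pos hu0 d2]
      have a3 : 81 * m ≤ u ^ 3 * (κ * ρ * V) := by
        have h34 : 81 * m / (κ * ρ * V) ≤ u := by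
          have h35 : 81 * m / (κ * ρ * V) ≤ u₀ := by
            rw [hu₀def]; linarith only [hn1, hn2]
          linarith only [h35, huu₀]
        rw [div_le_iff₀ d3] at h34
        have su : (1:ℝ) ≤ u ^ 2 := by nlinarith only [hu1]
        nlinarith only [h34, mul_pos hu0 d3, su]
      have hcube : 4 * u ^ 2 / ρ ^ 2 + 4 * κ * K₁ * u / ρ + m
          ≤ κ * (ρ * (u ^ 3 / 27) * V) := by
        have p1 : 4 * u ^ 2 / ρ ^ 2 ≤ κ * ρ * V * u ^ 3 / 81 := by
          rw [div_le_div_iff₀ (pow_pos hρ 2) (by norm_num : (0:ℝ) < 81)]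
          linarith only [mul_le_mul_of_nonneg_right a1 (sq_nonneg u)]
        have p2 : 4 * κ * K₁ * u / ρ ≤ κ * ρ * V * u ^ 3 / 81 := by
          rw [div_le_div_iff₀ hρ (by norm_num : (0:ℝ) < 81)]
          linarith only [mul_le_mul_of_nonneg_left a2 (mul_nonneg hκ.le hu0.le)]
        have p3 : m ≤ κ * ρ * V * u ^ 3 / 81 := by
          rw [le_div_iff₀ (by norm_num : (0:ℝ) < 81)]
          linarith only [a3]
        have p4 : κ * (ρ * (u ^ 3 / 27) * V) = 3 * (κ * ρ * V * u ^ 3 / 81) := by ring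
        linarith only [p1, p2, p3, p4]
      have hk1 : κ * (ρ * (u ^ 3 / 27) * V) ≤ κ * (ρ * Real.exp L * V) := by
        have h := mul_le_mul_of_nonneg_left hexp
          (le_of_lt (mul_pos (mul_pos hκ hρ) hV))
        nlinarith only [h]
      have hk2 : κ * (ρ * Real.exp L * V) ≤ κ * I := by
        exact mul_le_mul_of_nonneg_left hIlb2 hκ.le
      linarith only [hb1, hb2, hcube, hk1, hk2]
  have hsplit : W * ((‖x‖ ^ 2 / t ^ 2 - ‖𝔪‖ ^ 2) / α) - κ * (W * I) + m * W
      = W * ((‖ξ‖ ^ 2 / (α * t ^ 2) + 2 * (κ * J) / (α * t) + m) - κ * I) := by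
    rw [hx2]; ring
  rw [hsplit]
  exact mul_nonpos_of_nonneg_of_nonpos hW.le (sub_nonpos.mpr key)

end
end
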